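/- arXiv:1206.4224 — 11 statements merged into one kernel-verified Lean document; each statement's English description precedes it below -/
import Mathlib

section
/- Let f_1, ..., f_k be nonzero polynomials in K[X] over a field K. Then the valuation of the Wronskian W(f_1,...,f_k) (if it is nonzero) is at least Σ_{j=1}^k val(f_j) − (k choose 2). -/
open Polynomial

lemma dvd_deriv {K : Type*} [Field K] {m : ℕ} {g : K[X]} (h : X ^ m ∣ g) :
    (X : K[X]) ^ (m - 1) ∣ derivative g := by
  obtain ⟨c, rfl⟩ := h
  rw [derivative_mul, derivative_X_pow]
  refine dvd_add (Dvd.dvd.mul_right ?_ _) (Dvd.dvd.mul_right ?_ _)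
  · exact Dvd.dvd.mul_left (pow_dvd_pow _ le_rfl) _
  · exact pow_dvd_pow _ (Nat.sub_le _ _)

lemma dvd_iter {K : Type*} [Field K] {m : ℕ} {g : K[X]} (h : X ^ m ∣ g) (i : ℕ) :
    (X : K[X]) ^ (m - i) ∣ derivative^[i] g := by
  induction i generalizing m g with
  | zero => simpa using h
  | succ n ih =>
    rw [Function.iterate_succ_apply]
    have := ih (dvd_deriv h)
    rwa [Nat.sub_sub, Nat.add_comm] at this

noncomputable def wronskian {K : Type*} [Field K] {k : ℕ} (f : Fin k → K[X]) : K[X] :=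
  Matrix.det (Matrix.of fun i j : Fin k => (derivative^[(i : ℕ)] (f j)))

theorem stmt2 {K : Type*} [Field K] {k : ℕ} (f : Fin k → K[X])
    (hf : ∀ j, f j ≠ 0) (hW : wronskian f ≠ 0) :
    (∑ j, ((f j).rootMultiplicity 0 : ℤ)) - (k.choose 2 : ℤ)
      ≤ ((wronskian f).rootMultiplicity 0 : ℤ) := by
  set S := ∑ j, (f j).rootMultiplicity 0 with hS
  have hcast : (∑ j, ((f j).rootMultiplicity 0 : ℤ)) = (S : ℤ) := by push_cast [hS]; rfl
  rw [hcast]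
  set C := k.choose 2 with hC
  have key : S - C ≤ (wronskian f).rootMultiplicity 0 := by
    rw [Polynomial.le_rootMultiplicity_iff hW]
    have hX : (X - Polynomial.C (0 : K)) = X := by simp
    rw [hX, _root_.wronskian, Matrix.det_apply]
    apply Finset.dvd_sum
    intro σ _
    have hprod : (X : K[X]) ^ (S - C) ∣ ∏ i, (Matrix.of fun i j : Fin k =>
        (derivative^[(i : ℕ)] (f j))) (σ i) i := by
      have hd : ∀ i : Fin k, (X : K[X]) ^ ((f i).rootMultiplicity 0 - (σ i : ℕ)) ∣
          derivative^[(σ i : ℕ)] (f i) := by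
        intro i
        apply dvd_iter
        have := Polynomial.pow_rootMultiplicity_dvd (f i) 0
        rwa [hX] at this
      have h1 : ∏ i, (X : K[X]) ^ ((f i).rootMultiplicity 0 - (σ i : ℕ)) ∣
          ∏ i, (Matrix.of fun i j : Fin k => (derivative^[(i : ℕ)] (f j))) (σ i) i :=
        Finset.prod_dvd_prod_of_dvd _ _ (fun i _ => hd i)
      refine dvd_trans ?_ h1
      rw [Finset.prod_pow_eq_pow_sum]
      apply pow_dvd_pow
      -- S - C ≤ ∑ i, (rm i - σ i)
      have hσ : ∑ i : Fin k, (σ i : ℕ) = C := by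
        rw [hC, Nat.choose_two_right,
          Equiv.sum_comp σ (fun i : Fin k => (i : ℕ)),
          Fin.sum_univ_eq_sum_range (fun i => i), Finset.sum_range_id]
      have h2 : S ≤ (∑ i : Fin k, ((f i).rootMultiplicity 0 - (σ i : ℕ))) + C := by
        rw [← hσ, ← Finset.sum_add_distrib, hS]
        exact Finset.sum_le_sum (fun i _ => by omega)
      omega
    rcases Int.units_eq_one_or (Equiv.Perm.sign σ) with h | h <;>
      simp only [h, one_smul, Units.neg_smul, dvd_neg] <;> exact hprod
  have hnn : 0 ≤ (wronskian f).rootMultiplicity 0 := Nat.zero_le _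
  omega
end

section
/- Let K be a field of characteristic zero and let f_j = X^{α_j}(1+X)^{β_j} for 1 ≤ j ≤ k, where α_j, β_j ≥ k for all j. If f_1,...,f_k are linearly independent over K, then the valuation of their Wronskian is at most Σ_{j=1}^k α_j. -/
open Polynomial

private lemma pow_dvd_derivative {K : Type*} [CommRing K] (c p : K[X]) (b : ℕ)
    (h : c ^ b ∣ p) : c ^ (b - 1) ∣ derivative p := by
  obtain ⟨q, rfl⟩ := h
  rw [derivative_mul, derivative_pow]
  apply dvd_add
  · exact ((dvd_mul_left (c ^ (b - 1)) _).mul_right _).mul_right _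
  · exact (pow_dvd_pow c (Nat.sub_le b 1)).mul_right _

private lemma pow_dvd_iterate_derivative {K : Type*} [CommRing K] (c : K[X]) (i : ℕ) :
    ∀ (p : K[X]) (b : ℕ), c ^ b ∣ p → c ^ (b - i) ∣ derivative^[i] p := by
  induction i with
  | zero => intro p b h; simpa using h
  | succ i ih =>
    intro p b h
    rw [Function.iterate_succ_apply]
    have := ih (derivative p) (b - 1) (pow_dvd_derivative c p b h)
    have hbb : b - 1 - i = b - (i + 1) := by omega
    rwa [hbb] at this

theorem stmt3 {K : Type*} [Field K] [CharZero K] {k : ℕ} (α β : Fin k → ℕ)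
    (hα : ∀ j, k ≤ α j) (hβ : ∀ j, k ≤ β j)
    (f : Fin k → K[X]) (hf : ∀ j, f j = X ^ (α j) * (1 + X) ^ (β j))
    (hli : LinearIndependent K f) :
    (wronskian f).rootMultiplicity 0 ≤ ∑ j, α j := by
  by_cases hW : wronskian f = 0
  · simp [hW]
  set W := wronskian f with hWdef
  set m := W.rootMultiplicity 0 with hm
  have hX : (X : K[X]) ^ m ∣ W := by
    simpa using Polynomial.pow_rootMultiplicity_dvd W 0
  set S : ℕ := ∑ j : Fin k, (j : ℕ) with hSdef
  have hS : S ≤ ∑ j, β j := by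
    apply Finset.sum_le_sum
    intro j _
    exact le_trans (Nat.le_of_lt j.isLt) (hβ j)
  set M : ℕ := ∑ j, β j - S with hM
  -- sum of (β j - σ j) equals M for any permutation σ
  have hsum : ∀ σ : Equiv.Perm (Fin k), ∑ j, (β j - (σ j : ℕ)) = M := by
    intro σ
    have hperm : ∑ j, ((σ j : ℕ)) = S := Equiv.sum_comp σ (fun j => (j : ℕ))
    have hle : ∀ j, (σ j : ℕ) ≤ β j := fun j =>
      le_trans (Nat.le_of_lt (σ j).isLt) (hβ j)
    have : ∑ j, (β j - (σ j : ℕ)) + ∑ j, ((σ j : ℕ)) = ∑ j, β j := by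
      rw [← Finset.sum_add_distrib]
      exact Finset.sum_congr rfl fun j _ => Nat.sub_add_cancel (hle j)
    omega
  -- divisibility of entries
  have hentry : ∀ (i j : Fin k),
      (1 + X : K[X]) ^ (β j - (i : ℕ)) ∣ derivative^[(i : ℕ)] (f j) := by
    intro i j
    apply pow_dvd_iterate_derivative
    rw [hf j]
    exact Dvd.dvd.mul_left dvd_rfl _
  -- W expanded
  have hWexp : W = ∑ σ : Equiv.Perm (Fin k),
      Equiv.Perm.sign σ • ∏ j, derivative^[((σ j : Fin k) : ℕ)] (f j) := by
    rw [hWdef]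
    unfold _root_.wronskian
    rw [Matrix.det_apply]
    rfl
  have hY : (1 + X : K[X]) ^ M ∣ W := by
    rw [hWexp]
    apply Finset.dvd_sum
    intro σ _
    rw [Units.smul_def, zsmul_eq_mul]
    apply Dvd.dvd.mul_left
    calc (1 + X : K[X]) ^ M = ∏ j, (1 + X : K[X]) ^ (β j - (σ j : ℕ)) := by
          rw [Finset.prod_pow_eq_pow_sum, hsum σ]
      _ ∣ ∏ j, derivative^[((σ j : Fin k) : ℕ)] (f j) :=
          Finset.prod_dvd_prod_of_dvd _ _ (fun j _ => hentry (σ j) j)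
  -- degree bound
  have hdeg : W.natDegree ≤ ∑ j, α j + M := by
    rw [hWexp]
    apply Polynomial.natDegree_sum_le_of_forall_le
    intro σ _
    rw [Units.smul_def, zsmul_eq_mul]
    apply le_trans (Polynomial.natDegree_mul_le)
    rw [Polynomial.natDegree_intCast, Nat.zero_add]
    apply le_trans (Polynomial.natDegree_prod_le _ _)
    have hterm : ∀ j : Fin k,
        (derivative^[((σ j : Fin k) : ℕ)] (f j)).natDegree ≤ α j + (β j - (σ j : ℕ)) := by
      intro j
      apply le_trans (Polynomial.natDegree_iterate_derivative _ _)
      have hdf : (f j).natDegree ≤ α j + β j := by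
        rw [hf j]
        apply le_trans (Polynomial.natDegree_mul_le)
        have h1 : (X : K[X]).natDegree = 1 := Polynomial.natDegree_X
        have h2 : ((1 : K[X]) + X).natDegree ≤ 1 := by
          apply le_trans (Polynomial.natDegree_add_le _ _)
          simp
        calc ((X : K[X]) ^ α j).natDegree + (((1 : K[X]) + X) ^ β j).natDegree
            ≤ α j * 1 + β j * 1 := by
              apply Nat.add_le_add
              · apply le_trans (Polynomial.natDegree_pow_le)
                simp [Polynomial.natDegree_X]
              · apply le_trans (Polynomial.natDegree_pow_le)
                exact Nat.mul_le_mul_left _ h2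
          _ = α j + β j := by omega
      omega
    calc ∑ j, (derivative^[((σ j : Fin k) : ℕ)] (f j)).natDegree
        ≤ ∑ j, (α j + (β j - (σ j : ℕ))) := Finset.sum_le_sum (fun j _ => hterm j)
      _ = ∑ j, α j + M := by rw [Finset.sum_add_distrib, hsum σ]
  -- coprimality and conclusion
  have hcop : IsCoprime (X : K[X]) (1 + X) := by
    refine ⟨-1, 1, ?_⟩
    ring
  have hdvd : (X : K[X]) ^ m * (1 + X) ^ M ∣ W :=
    (hcop.pow).mul_dvd hX hY
  have hne0 : (X : K[X]) ^ m * (1 + X) ^ M ≠ 0 := by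
    apply mul_ne_zero <;> apply pow_ne_zero
    · exact Polynomial.X_ne_zero
    · intro h
      have := congrArg (Polynomial.eval 1) h
      simp at this
  have hle : ((X : K[X]) ^ m * (1 + X) ^ M).natDegree ≤ W.natDegree :=
    Polynomial.natDegree_le_of_dvd hdvd hW
  have hdd : ((X : K[X]) ^ m * (1 + X) ^ M).natDegree = m + M := by
    rw [Polynomial.natDegree_mul (pow_ne_zero _ Polynomial.X_ne_zero) (by
      apply pow_ne_zero
      intro h
      have := congrArg (Polynomial.eval 1) h
      simp at this)]
    rw [Polynomial.natDegree_pow, Polynomial.natDegree_pow, Polynomial.natDegree_X]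
    have h1X : ((1 : K[X]) + X).natDegree = 1 := by
      rw [add_comm]
      simpa using Polynomial.natDegree_X_add_C (1 : K)
    rw [h1X]; ring
  omega
end

section
/- Let K be a field of characteristic zero, k ≥ 1, and P = Σ_{j=1}^k a_j (1+X)^{β_j} with a_j ∈ K and distinct nonnegative integers β_j (Hajós' Lemma). If P is not identically zero, then val(P) ≤ k − 1. -/
open Polynomial

private lemma term_deriv {K : Type*} [Field K] (a : K) (m : ℕ) :
    (1 + X) * derivative (C a * (1 + X) ^ m) = C (a * m) * (1 + X : K[X]) ^ m := by
  cases m with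
  | zero => simp
  | succ m =>
    rw [derivative_mul, derivative_C, zero_mul, zero_add, derivative_pow]
    simp only [derivative_add, derivative_one, derivative_X, zero_add, mul_one,
      Nat.add_sub_cancel]
    rw [map_mul]
    ring

private lemma key {K : Type*} [Field K] [CharZero K] :
    ∀ (n : ℕ) {ι : Type} (s : Finset ι) (a : ι → K) (β : ι → ℕ),
      s.card = n → (∑ j ∈ s, C (a j) * (1 + X) ^ (β j)) ≠ 0 →
      ¬ ((X : K[X]) ^ n ∣ ∑ j ∈ s, C (a j) * (1 + X) ^ (β j)) := by
  intro n
  induction n with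
  | zero =>
    intro ι s a β hcard hne _
    rw [Finset.card_eq_zero.mp hcard] at hne
    simp at hne
  | succ n ih =>
    intro ι s a β hcard hne hdvd
    classical
    set P : K[X] := ∑ j ∈ s, C (a j) * (1 + X) ^ (β j) with hPdef
    have hs : s.Nonempty := Finset.card_pos.mp (by omega)
    obtain ⟨j₀, hj₀⟩ := hs
    have hstep : (1 + X) * derivative P = ∑ j ∈ s, C (a j * (β j : K)) * (1 + X) ^ (β j) := by
      rw [hPdef, derivative_sum, Finset.mul_sum]
      exact Finset.sum_congr rfl fun j _ => term_deriv (a j) (β j)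
    set R : K[X] := (1 + X) * derivative P - C ((β j₀ : K)) * P with hRdef
    have hRsum : R = ∑ j ∈ s, C (a j * ((β j : K) - (β j₀ : K))) * (1 + X) ^ (β j) := by
      rw [hRdef, hstep, hPdef, Finset.mul_sum, ← Finset.sum_sub_distrib]
      refine Finset.sum_congr rfl fun j _ => ?_
      simp only [map_mul, map_sub]
      ring
    have hRsum' : R = ∑ j ∈ s.erase j₀,
        C (a j * ((β j : K) - (β j₀ : K))) * (1 + X) ^ (β j) := by
      rw [hRsum, Finset.sum_erase]
      simp
    obtain ⟨Q, hQ⟩ := hdvd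
    have hPdvd : (X : K[X]) ^ (n + 1) ∣ P := ⟨Q, hQ⟩
    have hdP : (X : K[X]) ^ n ∣ derivative P := by
      rw [hQ, derivative_mul, derivative_X_pow, Nat.add_sub_cancel]
      exact dvd_add ((dvd_mul_left _ _).mul_right _)
        (((pow_dvd_pow X (Nat.le_succ n)).trans dvd_rfl).mul_right _)
    have hdR : (X : K[X]) ^ n ∣ R :=
      dvd_sub (hdP.mul_left _)
        (((pow_dvd_pow X (Nat.le_succ n)).trans hPdvd).mul_left _)
    by_cases hR : R = 0
    · -- ODE case: (1+X) P' = C β₀ P, but X^(n+1) ∣ P, P ≠ 0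
      have hode : (1 + X) * derivative P = C ((β j₀ : K)) * P := by
        have := sub_eq_zero.mp (hRdef ▸ hR)
        linear_combination this
      have hroot : P.IsRoot 0 := by
        have hx : (X - C 0 : K[X]) ∣ P := by
          simpa using (dvd_pow_self (X : K[X]) (Nat.succ_ne_zero n)).trans hPdvd
        exact dvd_iff_isRoot.mp hx
      have hm : 1 ≤ P.rootMultiplicity 0 := by
        rw [Nat.one_le_iff_ne_zero]
        intro h
        exact hne (rootMultiplicity_eq_zero_iff.mp h hroot)
      have hdP0 : derivative P ≠ 0 := by
        intro h
        have h2 : C ((β j₀ : K)) * P = 0 := by rw [← hode, h, mul_zero]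
        rcases mul_eq_zero.mp h2 with h3 | h3
        · rw [C_eq_zero, Nat.cast_eq_zero] at h3
          -- β j₀ = 0 and derivative P = 0 : P is a nonzero constant, contradicting root
          have : P = C (P.coeff 0) := eq_C_of_natDegree_eq_zero (natDegree_eq_zero_of_derivative_eq_zero h)
          rw [this] at hroot
          simp [IsRoot] at hroot
          exact hne (by rw [this, hroot, map_zero])
        · exact hne h3
      have h1X : (1 + X : K[X]) ≠ 0 := by
        intro h
        have := congrArg (eval 0) h
        simp at this
      have hβ0 : ((β j₀ : K)) ≠ 0 := by
        intro h
        rw [h, map_zero, zero_mul] at hode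
        exact hdP0 (by rcases mul_eq_zero.mp hode with h' | h'; exact (h1X h').elim; exact h')
      have hmul : rootMultiplicity 0 ((1 + X) * derivative P)
          = rootMultiplicity 0 (C ((β j₀ : K)) * P) := by rw [hode]
      rw [rootMultiplicity_mul (mul_ne_zero h1X hdP0),
        rootMultiplicity_mul (mul_ne_zero (by simpa [C_eq_zero] using hβ0) hne)] at hmul
      have h1 : rootMultiplicity 0 (1 + X : K[X]) = 0 :=
        rootMultiplicity_eq_zero (by simp [IsRoot])
      have h2 : rootMultiplicity 0 (C ((β j₀ : K))) = 0 :=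
        rootMultiplicity_eq_zero (by simp [IsRoot, hβ0])
      have h3 : rootMultiplicity 0 (derivative P) = rootMultiplicity 0 P - 1 :=
        derivative_rootMultiplicity_of_root hroot
      omega
    · -- induction case
      refine ih (s.erase j₀) (fun j => a j * ((β j : K) - (β j₀ : K))) β ?_ ?_ ?_
      · rw [Finset.card_erase_of_mem hj₀, hcard]
        omega
      · rw [← hRsum']; exact hR
      · rw [← hRsum']; exact hdR

theorem stmt4 {K : Type*} [Field K] [CharZero K] (k : ℕ) (hk : 1 ≤ k)
    (a : Fin k → K) (β : Fin k → ℕ) (hβ : Function.Injective β)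
    (P : K[X]) (hPdef : P = ∑ j, C (a j) * (1 + X) ^ (β j))
    (hP : P ≠ 0) :
    P.rootMultiplicity 0 ≤ k - 1 := by
  by_contra h
  push_neg at h
  have hk' : k ≤ P.rootMultiplicity 0 := by omega
  have hdvd : (X : K[X]) ^ k ∣ P := by
    have h2 := pow_rootMultiplicity_dvd P 0
    rw [C_0, sub_zero] at h2
    exact (pow_dvd_pow X hk').trans h2
  exact key k Finset.univ a β (by simp) (hPdef ▸ hP) (hPdef ▸ hdvd)
end

section
/- Let α_1 ≤ ... ≤ α_k be nonnegative integers. The smallest ℓ such that α_{ℓ+1} > max_{1≤j≤ℓ}(α_j + (ℓ+1-j choose 2)) coincides with the smallest ℓ such that α_{ℓ+1} > α_1 + (ℓ choose 2). -/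
lemma choose_two_add_le (a b : ℕ) : a.choose 2 + b.choose 2 ≤ (a + b).choose 2 := by
  induction b with
  | zero => simp
  | succ b ih =>
    have h1 : (b + 1).choose 2 = b + b.choose 2 := by
      rw [Nat.choose_succ_succ, Nat.choose_one_right]
    have h2 : (a + (b + 1)).choose 2 = (a + b) + (a + b).choose 2 := by
      rw [show a + (b + 1) = (a + b) + 1 from rfl, Nat.choose_succ_succ,
        Nat.choose_one_right]
    omega

lemma key_s7 (k : ℕ) (α : ℕ → ℕ) (ℓ : ℕ)
    (h : IsLeast {l | 1 ≤ l ∧ l + 1 ≤ k ∧ α 1 + l.choose 2 < α (l + 1)} ℓ) :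
    ∀ j, 1 ≤ j → j ≤ ℓ → α j + (ℓ + 1 - j).choose 2 < α (ℓ + 1) := by
  obtain ⟨⟨h1, h2, h3⟩, hlb⟩ := h
  intro j hj1 hjl
  rcases eq_or_lt_of_le hj1 with h | h
  · rw [← h]
    simpa using h3
  · -- j ≥ 2; j - 1 is not in the set
    have hnb : ¬ (α 1 + (j - 1).choose 2 < α j) := by
      intro hc
      have : ℓ ≤ j - 1 := hlb ⟨by omega, by omega,
        by rwa [show j - 1 + 1 = j by omega]⟩
      omega
    have hch := choose_two_add_le (j - 1) (ℓ + 1 - j)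
    rw [show j - 1 + (ℓ + 1 - j) = ℓ by omega] at hch
    omega

theorem stmt7 (k : ℕ) (α : ℕ → ℕ)
    (hα : ∀ i j, 1 ≤ i → i ≤ j → j ≤ k → α i ≤ α j) (ℓ : ℕ) :
    IsLeast {l | 1 ≤ l ∧ l + 1 ≤ k ∧
        ∀ j, 1 ≤ j → j ≤ l → α j + (l + 1 - j).choose 2 < α (l + 1)} ℓ ↔
      IsLeast {l | 1 ≤ l ∧ l + 1 ≤ k ∧ α 1 + l.choose 2 < α (l + 1)} ℓ := by
  constructor
  · rintro ⟨⟨h1, h2, h3⟩, hlb⟩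
    -- ℓ is in B
    have hB : ℓ ∈ {l | 1 ≤ l ∧ l + 1 ≤ k ∧ α 1 + l.choose 2 < α (l + 1)} := by
      refine ⟨h1, h2, ?_⟩
      have := h3 1 le_rfl h1
      simpa using this
    -- B is nonempty, take its least element
    have hex : ∃ l, 1 ≤ l ∧ l + 1 ≤ k ∧ α 1 + l.choose 2 < α (l + 1) := ⟨ℓ, hB⟩
    set m := Nat.find hex with hm
    have hmB : m ∈ {l | 1 ≤ l ∧ l + 1 ≤ k ∧ α 1 + l.choose 2 < α (l + 1)} :=
      Nat.find_spec hex
    have hmlb : ∀ x, x ∈ {l | 1 ≤ l ∧ l + 1 ≤ k ∧ α 1 + l.choose 2 < α (l + 1)} → m ≤ x :=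
      fun x hx => Nat.find_min' hex hx
    have hmA := key_s7 k α m ⟨hmB, fun x hx => hmlb x hx⟩
    have hℓm : ℓ ≤ m := hlb ⟨hmB.1, hmB.2.1, hmA⟩
    have hmℓ : m ≤ ℓ := hmlb ℓ hB
    have : m = ℓ := le_antisymm hmℓ hℓm
    subst this
    exact ⟨hmB, fun x hx => hmlb x hx⟩
  · rintro h
    refine ⟨⟨h.1.1, h.1.2.1, key_s7 k α ℓ h⟩, ?_⟩
    intro x ⟨hx1, hx2, hx3⟩
    refine h.2 ⟨hx1, hx2, ?_⟩
    have := hx3 1 le_rfl hx1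
    simpa using this
end

section
/- For all integers 0 < m < 2k+3, the identity Σ_{j=0}^{k} ((2k+3)/(2j+1)) · (k+1+j choose k+1−j) · (k+1−j choose m−2j−1) = (2k+3 choose m) holds. -/
open Polynomial Finset

/-- Lucas-type coefficients. -/
def aaux (n i : ℕ) : ℕ := (n - i).choose i + (n - i - 1).choose (i - 1)

noncomputable def MM (n : ℕ) : Polynomial ℚ :=
  ∑ j ∈ Finset.range n,
    Polynomial.C (aaux n (j + 1) : ℚ) * (X ^ (n - 2 * j - 2) * (1 + X) ^ (j + 1))

lemma aaux_zero {n i : ℕ} (hn : 2 ≤ n) (h : n < 2 * i) : aaux n i = 0 := by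
  unfold aaux
  have h1 : (n - i).choose i = 0 := Nat.choose_eq_zero_of_lt (by omega)
  have h2 : (n - i - 1).choose (i - 1) = 0 := Nat.choose_eq_zero_of_lt (by omega)
  omega

lemma aaux_one {n : ℕ} (hn : 2 ≤ n) : aaux n 1 = n := by
  unfold aaux
  obtain ⟨d, rfl⟩ : ∃ d, n = d + 2 := ⟨n - 2, by omega⟩
  have e1 : d + 2 - 1 = d + 1 := by omega
  have e2 : d + 2 - 1 - 1 = d := by omega
  have e3 : (1 : ℕ) - 1 = 0 := by omega
  rw [e2, e1, e3, Nat.choose_one_right, Nat.choose_zero_right]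

lemma aaux_pascal {n : ℕ} (hn : 2 ≤ n) {j : ℕ} (hj : j < n) :
    aaux (n + 2) (j + 2) = aaux (n + 1) (j + 2) + aaux n (j + 1) := by
  rcases Nat.lt_or_ge j (n - 1) with h | h
  · obtain ⟨d, rfl⟩ : ∃ d, n = j + 2 + d := ⟨n - j - 2, by omega⟩
    unfold aaux
    have e2 : j + 2 + d + 2 - (j + 2) - 1 = d + 1 := by omega
    have e1 : j + 2 + d + 2 - (j + 2) = d + 2 := by omega
    have e4 : j + 2 + d + 1 - (j + 2) - 1 = d := by omega
    have e3 : j + 2 + d + 1 - (j + 2) = d + 1 := by omega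
    have e6 : j + 2 + d - (j + 1) - 1 = d := by omega
    have e5 : j + 2 + d - (j + 1) = d + 1 := by omega
    have e7 : j + 2 - 1 = j + 1 := by omega
    have e8 : j + 1 - 1 = j := by omega
    rw [e2, e1, e4, e3, e6, e5, e7, e8]
    have p1 : (d + 2).choose (j + 2) = (d + 1).choose (j + 1) + (d + 1).choose (j + 2) :=
      Nat.choose_succ_succ (d + 1) (j + 1)
    have p2 : (d + 1).choose (j + 1) = d.choose j + d.choose (j + 1) :=
      Nat.choose_succ_succ d j
    omega
  · obtain rfl : n = j + 1 := by omega
    have hj1 : 1 ≤ j := by omega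
    unfold aaux
    have e2 : j + 1 + 2 - (j + 2) - 1 = 0 := by omega
    have e1 : j + 1 + 2 - (j + 2) = 1 := by omega
    have e4 : j + 1 + 1 - (j + 2) - 1 = 0 := by omega
    have e3 : j + 1 + 1 - (j + 2) = 0 := by omega
    have e6 : j + 1 - (j + 1) - 1 = 0 := by omega
    have e5 : j + 1 - (j + 1) = 0 := by omega
    have e7 : j + 2 - 1 = j + 1 := by omega
    have e8 : j + 1 - 1 = j := by omega
    rw [e2, e1, e4, e3, e6, e5, e7, e8]
    have h1 : (1 : ℕ).choose (j + 2) = 0 := Nat.choose_eq_zero_of_lt (by omega)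
    have h2 : (0 : ℕ).choose (j + 1) = 0 := Nat.choose_eq_zero_of_lt (by omega)
    have h3 : (0 : ℕ).choose (j + 2) = 0 := Nat.choose_eq_zero_of_lt (by omega)
    have h4 : (0 : ℕ).choose j = 0 := Nat.choose_eq_zero_of_lt (by omega)
    omega

lemma MM_rec {n : ℕ} (hn : 2 ≤ n) :
    MM (n + 2) = X * MM (n + 1) + (1 + X) * MM n + X ^ n * (1 + X) := by
  have hz : aaux (n + 2) (n + 1 + 1) = 0 := aaux_zero (by omega) (by omega)
  have h1 : aaux (n + 2) 1 = n + 2 := aaux_one (by omega)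
  have h1' : aaux (n + 1) 1 = n + 1 := aaux_one (by omega)
  have hL : MM (n + 2) = Polynomial.C ((n : ℚ) + 2) * (X ^ n * (1 + X)) +
      ∑ j ∈ Finset.range n,
        Polynomial.C (aaux (n + 2) (j + 2) : ℚ) * (X ^ (n - 2 * j - 2) * (1 + X) ^ (j + 2)) := by
    have ht : (∑ x ∈ Finset.range n, Polynomial.C ((aaux (n + 2) (x + 1 + 1) : ℚ)) *
          (X ^ (n + 2 - 2 * (x + 1) - 2) * (1 + X) ^ (x + 1 + 1)))
        = ∑ j ∈ Finset.range n, Polynomial.C ((aaux (n + 2) (j + 2) : ℚ)) *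
          (X ^ (n - 2 * j - 2) * (1 + X) ^ (j + 2)) := by
      refine Finset.sum_congr rfl fun j hj => ?_
      rw [show n + 2 - 2 * (j + 1) - 2 = n - 2 * j - 2 from by omega]
    rw [MM, Finset.sum_range_succ, Finset.sum_range_succ', hz, ht]
    rw [show n + 2 - 2 * 0 - 2 = n from by omega, h1]
    simp only [Nat.cast_zero, map_zero, zero_mul, add_zero]
    push_cast
    ring
  have hR1 : X * MM (n + 1) = Polynomial.C ((n : ℚ) + 1) * (X ^ n * (1 + X)) +
      ∑ j ∈ Finset.range n,
        Polynomial.C (aaux (n + 1) (j + 2) : ℚ) * (X ^ (n - 2 * j - 2) * (1 + X) ^ (j + 2)) := by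
    rw [MM, Finset.sum_range_succ', mul_add, Finset.mul_sum]
    have ht : (∑ x ∈ Finset.range n, X * (Polynomial.C ((aaux (n + 1) (x + 1 + 1) : ℚ)) *
          (X ^ (n + 1 - 2 * (x + 1) - 2) * (1 + X) ^ (x + 1 + 1))))
        = ∑ j ∈ Finset.range n, Polynomial.C ((aaux (n + 1) (j + 2) : ℚ)) *
          (X ^ (n - 2 * j - 2) * (1 + X) ^ (j + 2)) := by
      refine Finset.sum_congr rfl fun j hj => ?_
      rcases Nat.lt_or_ge (2 * j + 3) (n + 1) with h | h
      · have hx : X * X ^ (n + 1 - 2 * (j + 1) - 2) = (X ^ (n - 2 * j - 2) : Polynomial ℚ) := by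
          rw [← pow_succ']
          congr 1
          omega
        rw [← hx]
        ring
      · have hz2 : aaux (n + 1) (j + 1 + 1) = 0 := aaux_zero (by omega) (by omega)
        rw [hz2]
        simp
    rw [ht, show n + 1 - 2 * 0 - 2 = n - 1 from by omega, h1']
    have hx : X * X ^ (n - 1) = (X ^ n : Polynomial ℚ) := by
      rw [← pow_succ']
      congr 1
      omega
    rw [add_comm]
    congr 1
    rw [← hx]
    push_cast
    ring
  have hR2 : (1 + X) * MM n =
      ∑ j ∈ Finset.range n,
        Polynomial.C (aaux n (j + 1) : ℚ) * (X ^ (n - 2 * j - 2) * (1 + X) ^ (j + 2)) := by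
    rw [MM, Finset.mul_sum]
    apply Finset.sum_congr rfl
    intro j hj
    rw [pow_succ]
    ring
  have hs : ∀ j ∈ Finset.range n,
      Polynomial.C (aaux (n + 2) (j + 2) : ℚ) * (X ^ (n - 2 * j - 2) * (1 + X) ^ (j + 2)) =
      Polynomial.C (aaux (n + 1) (j + 2) : ℚ) * (X ^ (n - 2 * j - 2) * (1 + X) ^ (j + 2)) +
      Polynomial.C (aaux n (j + 1) : ℚ) * (X ^ (n - 2 * j - 2) * (1 + X) ^ (j + 2)) := by
    intro j hj
    rw [Finset.mem_range] at hj
    rw [aaux_pascal hn hj, Nat.cast_add, map_add]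
    ring
  rw [hL, hR1, hR2, Finset.sum_congr rfl hs, Finset.sum_add_distrib]
  simp only [map_add, map_one, map_ofNat]
  ring

lemma MM_closed : ∀ t : ℕ,
    MM (2 * t + 2) = (1 + X) ^ (2 * t + 2) - X ^ (2 * t + 2) + 1 ∧
    MM (2 * t + 3) = (1 + X) ^ (2 * t + 3) - X ^ (2 * t + 3) - 1 := by
  intro t
  induction t with
  | zero =>
    constructor
    · show MM 2 = _
      rw [MM]
      simp [Finset.sum_range_succ, aaux]
      ring
    · show MM 3 = _
      rw [MM]
      simp [Finset.sum_range_succ, aaux]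
      norm_num [Nat.choose]
      ring
  | succ t ih =>
    obtain ⟨ih1, ih2⟩ := ih
    have e1 : 2 * (t + 1) + 2 = 2 * t + 2 + 2 := by omega
    have e2 : 2 * (t + 1) + 3 = 2 * t + 3 + 2 := by omega
    have e3 : 2 * t + 2 + 1 = 2 * t + 3 := by omega
    have h1 : MM (2 * (t + 1) + 2) = (1 + X) ^ (2 * (t + 1) + 2) - X ^ (2 * (t + 1) + 2) + 1 := by
      rw [e1, MM_rec (by omega), e3, ih1, ih2]
      ring
    refine ⟨h1, ?_⟩
    rw [e1] at h1
    have e4 : 2 * t + 3 + 1 = 2 * t + 2 + 2 := by omega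
    rw [e2, MM_rec (by omega), e4, h1, ih2]
    ring

lemma aaux_val {k j : ℕ} (hj : j ≤ k) :
    (2 * j + 1) * aaux (2 * k + 3) (k + 1 - j) = (2 * k + 3) * (k + 1 + j).choose (k + 1 - j) := by
  obtain ⟨d, rfl⟩ : ∃ d, k = j + d := ⟨k - j, by omega⟩
  unfold aaux
  have e1 : j + d + 1 - j = d + 1 := by omega
  rw [e1]
  have e2 : 2 * (j + d) + 3 - (d + 1) = 2 * j + d + 2 := by omega
  rw [e2]
  have e3 : 2 * j + d + 2 - 1 = 2 * j + d + 1 := by omega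
  rw [e3]
  have e5 : d + 1 - 1 = d := by omega
  rw [e5]
  have e4 : j + d + 1 + j = 2 * j + d + 1 := by omega
  rw [e4]
  have s1 : (2 * j + d + 2).choose (d + 1) = (2 * j + d + 2).choose (2 * j + 1) := by
    rw [← Nat.choose_symm (by omega : 2 * j + 1 ≤ 2 * j + d + 2)]
    congr 1
    omega
  have s2 : (2 * j + d + 1).choose d = (2 * j + d + 1).choose (2 * j + 1) := by
    rw [← Nat.choose_symm (by omega : 2 * j + 1 ≤ 2 * j + d + 1)]
    congr 1
    omega
  have s3 : (2 * j + d + 1).choose (d + 1) = (2 * j + d + 1).choose (2 * j) := by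
    rw [← Nat.choose_symm (by omega : 2 * j ≤ 2 * j + d + 1)]
    congr 1
    omega
  rw [s1, s2, s3]
  have h1 := Nat.add_one_mul_choose_eq (2 * j + d + 1) (2 * j)
  have h2 := Nat.choose_succ_right_eq (2 * j + d + 1) (2 * j)
  have e6 : 2 * j + d + 1 - 2 * j = d + 1 := by omega
  rw [e6] at h2
  have h1' : (2 * j + d + 2) * (2 * j + d + 1).choose (2 * j)
      = (2 * j + d + 2).choose (2 * j + 1) * (2 * j + 1) := by
    have : 2 * j + d + 1 + 1 = 2 * j + d + 2 := by omega
    rw [← this]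
    exact h1
  zify at h1' h2 ⊢
  nlinarith [h1', h2]

theorem stmt8 (k m : ℕ) (hm0 : 0 < m) (hm : m < 2 * k + 3) :
    (∑ j ∈ Finset.range (k + 1),
        if 2 * j + 1 ≤ m then
          ((2 * k + 3 : ℚ) / (2 * j + 1)) * ((k + 1 + j).choose (k + 1 - j))
            * ((k + 1 - j).choose (m - (2 * j + 1)))
        else 0)
      = ((2 * k + 3).choose m : ℚ) := by
  have key : MM (2 * k + 3) = (1 + X) ^ (2 * k + 3) - X ^ (2 * k + 3) - 1 := (MM_closed k).2
  have hco := congrArg (fun p => Polynomial.coeff p m) key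
  simp only [Polynomial.coeff_sub, Polynomial.coeff_one_add_X_pow, Polynomial.coeff_X_pow,
    Polynomial.coeff_one] at hco
  rw [if_neg (by omega), if_neg (by omega)] at hco
  have hMM : Polynomial.coeff (MM (2 * k + 3)) m =
      ∑ j ∈ Finset.range (k + 1),
        if 2 * j + 1 ≤ m then
          ((2 * k + 3 : ℚ) / (2 * j + 1)) * ((k + 1 + j).choose (k + 1 - j))
            * ((k + 1 - j).choose (m - (2 * j + 1)))
        else 0 := by
    rw [MM, Polynomial.finset_sum_coeff]
    rw [← Finset.sum_subset (Finset.range_subset_range.2 (by omega : k + 1 ≤ 2 * k + 3))]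
    · rw [← Finset.sum_range_reflect]
      apply Finset.sum_congr rfl
      intro j hj
      rw [Finset.mem_range] at hj
      have hjk : j ≤ k := by omega
      have e1 : k + 1 - 1 - j + 1 = k + 1 - j := by omega
      have e2 : 2 * k + 3 - 2 * (k + 1 - 1 - j) - 2 = 2 * j + 1 := by omega
      rw [e1, e2, Polynomial.coeff_C_mul, mul_comm (X ^ (2 * j + 1)),
        Polynomial.coeff_mul_X_pow']
      by_cases h : 2 * j + 1 ≤ m
      · rw [if_pos h, if_pos h, Polynomial.coeff_one_add_X_pow]
        have hq := congrArg (fun x : ℕ => (x : ℚ)) (aaux_val hjk)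
        push_cast at hq
        have h2j : (2 * (j : ℚ) + 1) ≠ 0 := by positivity
        rw [div_mul_eq_mul_div, div_mul_eq_mul_div, eq_comm, div_eq_iff h2j]
        linear_combination (-((k + 1 - j).choose (m - (2 * j + 1)) : ℚ)) * hq
      · rw [if_neg h, if_neg h, mul_zero]
    · intro j hj1 hj2
      rw [Finset.mem_range] at hj1 hj2
      have hz : aaux (2 * k + 3) (j + 1) = 0 := aaux_zero (by omega) (by omega)
      rw [hz]
      simp
  rw [← hMM, hco]
  ring
end

section
/- For every k ≥ 3, the polynomial P_k(X) = −1 + (1+X)^{2k+3} − Σ_{j=0}^{k} a_j X^{2j+1}(1+X)^{k+1−j}, where a_j = ((2k+3)/(2j+1))·(k+1+j choose k+1−j), satisfies P_k(X) = X^{2k+3}. In particular, there exists a nonzero (k+3)-term polynomial of the form Σ_j c_j X^{α_j}(1+X)^{β_j} with min_j α_j = 0 and valuation 2k+3 = 2(k+3)−3. -/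
open Polynomial

noncomputable def Pm (m : ℕ) : ℚ[X] :=
  ∑ j ∈ Finset.range (m + 1), C (((m + j).choose (2 * j) : ℚ)) * X ^ (2 * j) * (1 + X) ^ (m - j)

noncomputable def Rm (m : ℕ) : ℚ[X] :=
  ∑ j ∈ Finset.range (m + 1), C (((m + 1 + j).choose (2 * j + 1) : ℚ)) * X ^ (2 * j + 1) * (1 + X) ^ (m - j)

lemma Pa (m : ℕ) : Pm (m + 1) = (1 + X) * Pm m + X * Rm m := by
  have hP : (1 + X) * Pm m = (1 + X) ^ (m + 1)
      + ∑ i ∈ Finset.range (m + 1), C (((m + 1 + i).choose (2 * i + 2) : ℚ)) * X ^ (2 * i + 2) * (1 + X) ^ (m - i) := by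
    conv_rhs => rw [Finset.sum_range_succ]
    rw [Nat.choose_eq_zero_of_lt (show m + 1 + m < 2 * m + 2 by omega)]
    simp only [Nat.cast_zero, map_zero, zero_mul, add_zero]
    simp only [Pm]
    rw [Finset.mul_sum, Finset.sum_range_succ']
    rw [add_comm]
    congr 1
    · simp [pow_succ]
      ring
    · refine Finset.sum_congr rfl fun i hi => ?_
      rw [Finset.mem_range] at hi
      rw [show m + (i + 1) = m + 1 + i by omega, show 2 * (i + 1) = 2 * i + 2 by omega,
        show m - i = (m - (i + 1)) + 1 by omega, pow_succ]
      ring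
  have hR : X * Rm m
      = ∑ i ∈ Finset.range (m + 1), C (((m + 1 + i).choose (2 * i + 1) : ℚ)) * X ^ (2 * i + 2) * (1 + X) ^ (m - i) := by
    simp only [Rm]
    rw [Finset.mul_sum]
    refine Finset.sum_congr rfl fun i hi => ?_
    rw [show 2 * i + 2 = (2 * i + 1) + 1 by omega, pow_succ]
    ring
  rw [hP, hR]
  simp only [Pm]
  rw [Finset.sum_range_succ']
  have h0 : C (((m + 1 + 0).choose (2 * 0) : ℚ)) * X ^ (2 * 0) * (1 + X) ^ (m + 1 - 0) = (1 + X) ^ (m + 1) := by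
    simp
  rw [h0, add_comm]
  rw [add_assoc, ← Finset.sum_add_distrib]
  congr 1
  refine Finset.sum_congr rfl fun i hi => ?_
  rw [Finset.mem_range] at hi
  have hc : (m + 1 + (i + 1)).choose (2 * (i + 1)) = (m + 1 + i).choose (2 * i + 1) + (m + 1 + i).choose (2 * i + 2) := by
    rw [show m + 1 + (i + 1) = (m + 1 + i) + 1 by omega, show 2 * (i + 1) = (2 * i + 1) + 1 by omega]
    exact Nat.choose_succ_succ _ _
  rw [hc, show m + 1 - (i + 1) = m - i by omega]
  push_cast
  rw [C_add]
  ring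

lemma Rb (m : ℕ) : Rm (m + 1) = (1 + X) * Rm m + X * Pm (m + 1) := by
  have e1 : ∀ j ∈ Finset.range (m + 1 + 1),
      C (((m + 1 + 1 + j).choose (2 * j + 1) : ℚ)) * X ^ (2 * j + 1) * (1 + X) ^ (m + 1 - j)
      = C (((m + 1 + j).choose (2 * j + 1) : ℚ)) * X ^ (2 * j + 1) * (1 + X) ^ (m + 1 - j)
        + X * (C (((m + 1 + j).choose (2 * j) : ℚ)) * X ^ (2 * j) * (1 + X) ^ (m + 1 - j)) := by
    intro j hj
    have hc : (m + 1 + 1 + j).choose (2 * j + 1) = (m + 1 + j).choose (2 * j) + (m + 1 + j).choose (2 * j + 1) := by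
      rw [show m + 1 + 1 + j = (m + 1 + j) + 1 by omega]
      exact Nat.choose_succ_succ _ _
    rw [hc]
    push_cast
    rw [C_add]
    ring
  simp only [Rm, Pm]
  rw [Finset.sum_congr rfl e1, Finset.sum_add_distrib]
  congr 1
  · rw [Finset.sum_range_succ, Nat.choose_eq_zero_of_lt (show m + 1 + (m + 1) < 2 * (m + 1) + 1 by omega)]
    simp only [Nat.cast_zero, map_zero, zero_mul, add_zero]
    rw [Finset.mul_sum]
    refine Finset.sum_congr rfl fun j hj => ?_
    rw [Finset.mem_range] at hj
    rw [show m + 1 - j = (m - j) + 1 by omega, pow_succ]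
    ring
  · rw [Finset.mul_sum]

lemma PRc (m : ℕ) : (2 + X) * Pm m = (1 + X) ^ (2 * m + 1) + 1 ∧ (2 + X) * Rm m = (1 + X) ^ (2 * m + 2) - 1 := by
  induction m with
  | zero =>
    constructor
    · simp [Pm]
      ring
    · simp [Rm]
      ring
  | succ n ih =>
    have hP : (2 + X) * Pm (n + 1) = (1 + X) ^ (2 * (n + 1) + 1) + 1 := by
      rw [Pa]
      linear_combination (1 + X) * ih.1 + X * ih.2
    refine ⟨hP, ?_⟩
    rw [Rb]
    linear_combination (1 + X) * ih.2 + X * hP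

lemma coeffC (k j : ℕ) (hj : j ≤ k) (aj : ℚ)
    (haj : aj = ((2 * k + 3 : ℚ) / (2 * j + 1)) * ((k + 1 + j).choose (k + 1 - j))) :
    aj = ((k + 1 + j).choose (2 * j + 1) : ℚ) + ((k + 1 + 1 + j).choose (2 * j + 1) : ℚ) := by
  subst haj
  have hsymm : (k + 1 + j).choose (k + 1 - j) = (k + 1 + j).choose (2 * j) := by
    rw [← Nat.choose_symm (show 2 * j ≤ k + 1 + j by omega)]
    congr 1
    omega
  rw [hsymm, show k + 1 + 1 + j = k + 1 + j + 1 by omega]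
  have h1 : (k + 1 + j).choose (2 * j + 1) * (2 * j + 1) = (k + 1 + j).choose (2 * j) * (k + 1 - j) := by
    have h := Nat.choose_succ_right_eq (k + 1 + j) (2 * j)
    rwa [show k + 1 + j - 2 * j = k + 1 - j by omega] at h
  have h2 : (k + 1 + j + 1) * (k + 1 + j).choose (2 * j) = (k + 1 + j + 1).choose (2 * j + 1) * (2 * j + 1) :=
    Nat.add_one_mul_choose_eq (k + 1 + j) (2 * j)
  have h1q : ((k + 1 + j).choose (2 * j + 1) : ℚ) * (2 * j + 1)
      = ((k + 1 + j).choose (2 * j) : ℚ) * ((k : ℚ) + 1 - j) := by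
    have := congrArg (Nat.cast (R := ℚ)) h1
    push_cast [Nat.cast_sub (show j ≤ k + 1 by omega)] at this
    linarith [this]
  have h2q : ((k : ℚ) + 1 + j + 1) * ((k + 1 + j).choose (2 * j) : ℚ)
      = ((k + 1 + j + 1).choose (2 * j + 1) : ℚ) * (2 * j + 1) := by
    exact_mod_cast congrArg (Nat.cast (R := ℚ)) h2
  have hne : (2 * (j : ℚ) + 1) ≠ 0 := by positivity
  rw [div_mul_eq_mul_div, div_eq_iff hne]
  linear_combination (-1 : ℚ) * h1q + h2q

theorem stmt9 (k : ℕ) (hk : 3 ≤ k)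
    (a : ℕ → ℚ) (ha : ∀ j, a j = ((2 * k + 3 : ℚ) / (2 * j + 1)) * ((k + 1 + j).choose (k + 1 - j))) :
    (-1 + (1 + X) ^ (2 * k + 3)
        - ∑ j ∈ Finset.range (k + 1), C (a j) * X ^ (2 * j + 1) * (1 + X) ^ (k + 1 - j) : ℚ[X])
      = X ^ (2 * k + 3) := by
  have hsplit : (∑ j ∈ Finset.range (k + 1), C (a j) * X ^ (2 * j + 1) * (1 + X) ^ (k + 1 - j) : ℚ[X])
      = (1 + X) * Rm k + (Rm (k + 1) - X ^ (2 * k + 3)) := by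
    have h1 : (1 + X) * Rm k
        = ∑ j ∈ Finset.range (k + 1), C (((k + 1 + j).choose (2 * j + 1) : ℚ)) * X ^ (2 * j + 1) * (1 + X) ^ (k + 1 - j) := by
      simp only [Rm]
      rw [Finset.mul_sum]
      refine Finset.sum_congr rfl fun j hj => ?_
      rw [Finset.mem_range] at hj
      rw [show k + 1 - j = (k - j) + 1 by omega, pow_succ]
      ring
    have h2 : Rm (k + 1) - X ^ (2 * k + 3)
        = ∑ j ∈ Finset.range (k + 1), C (((k + 1 + 1 + j).choose (2 * j + 1) : ℚ)) * X ^ (2 * j + 1) * (1 + X) ^ (k + 1 - j) := by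
      simp only [Rm]
      rw [Finset.sum_range_succ]
      have hlast : C (((k + 1 + 1 + (k + 1)).choose (2 * (k + 1) + 1) : ℚ)) * X ^ (2 * (k + 1) + 1) * (1 + X) ^ (k + 1 - (k + 1))
          = X ^ (2 * k + 3) := by
        rw [show k + 1 + 1 + (k + 1) = 2 * (k + 1) + 1 by omega, Nat.choose_self,
          show k + 1 - (k + 1) = 0 by omega, show 2 * (k + 1) + 1 = 2 * k + 3 by omega]
        simp
      rw [hlast]
      ring
    rw [h1, h2, ← Finset.sum_add_distrib]
    refine Finset.sum_congr rfl fun j hj => ?_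
    rw [Finset.mem_range] at hj
    rw [coeffC k j (by omega) (a j) (ha j), C_add]
    ring
  rw [hsplit]
  have hne : (2 + X : ℚ[X]) ≠ 0 := by
    intro h
    have := congrArg (fun p => Polynomial.eval 0 p) h
    simp at this
  apply mul_left_cancel₀ hne
  linear_combination (-(1 + X) : ℚ[X]) * (PRc k).2 + (-1 : ℚ[X]) * (PRc (k + 1)).2
end

section
/- Let K be a field of characteristic zero and P = Σ_{j=1}^k a_j X^{α_j}(uX+v)^{β_j}(wX+t)^{γ_j} with u,v,w,t ∈ K all nonzero and α_1 ≤ ... ≤ α_k. If P is not identically zero, then val(P) ≤ max_{1≤j≤k} (α_j + 2·(k+1−j choose 2)). -/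
open Polynomial Finset

set_option linter.unusedSectionVars false

namespace Stmt13

variable {K : Type*} [Field K] [CharZero K]

lemma sum_tsub_le {ι : Type*} (s : Finset ι) (f g : ι → ℕ) :
    (∑ i ∈ s, f i) - (∑ i ∈ s, g i) ≤ ∑ i ∈ s, (f i - g i) := by
  classical
  induction s using Finset.induction_on with
  | empty => simp
  | insert _ _ h ih =>
    rw [Finset.sum_insert h, Finset.sum_insert h, Finset.sum_insert h]
    omega

lemma X_pow_dvd_iterate_derivative (p : K[X]) (m i : ℕ) (hp : (X : K[X]) ^ m ∣ p) :
    (X : K[X]) ^ (m - i) ∣ derivative^[i] p := by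
  induction i with
  | zero => simpa using hp
  | succ i ih =>
    rw [Function.iterate_succ_apply']
    obtain ⟨r, hr⟩ := ih
    rcases Nat.eq_zero_or_pos (m - i) with h0 | hpos
    · have : m - (i + 1) = 0 := by omega
      rw [this, pow_zero]
      exact one_dvd _
    · have hms : m - (i + 1) = (m - i) - 1 := by omega
      rw [hms, hr, derivative_mul, derivative_X_pow]
      apply dvd_add
      · exact Dvd.dvd.mul_right (Dvd.dvd.mul_left (pow_dvd_pow X le_rfl) _) r
      · exact Dvd.dvd.mul_right (pow_dvd_pow X (by omega)) _

lemma le_of_strictMono {n : ℕ} (f : Fin n → ℕ) (hf : StrictMono f) (p : Fin n) :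
    (p : ℕ) ≤ f p := by
  have H : ∀ m : ℕ, ∀ p : Fin n, (p : ℕ) = m → m ≤ f p := by
    intro m
    induction m with
    | zero => intro p _; exact Nat.zero_le _
    | succ j ih =>
      intro p hp
      have hj : j < n := by omega
      have h1 := ih ⟨j, hj⟩ rfl
      have h2 : (⟨j, hj⟩ : Fin n) < p := by
        simp only [Fin.lt_def, hp]; omega
      have := hf h2
      omega
  exact H _ p rfl

lemma coeff_prod_at {ι : Type*} (s : Finset ι) (f : ι → K[X]) (d : ι → ℕ)
    (h : ∀ i ∈ s, (f i).natDegree ≤ d i) :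
    (∏ i ∈ s, f i).coeff (∑ i ∈ s, d i) = ∏ i ∈ s, (f i).coeff (d i) := by
  classical
  induction s using Finset.induction_on with
  | empty => simp
  | @insert a s ha ih =>
    rw [Finset.prod_insert ha, Finset.sum_insert ha, Finset.prod_insert ha,
      coeff_mul_add_eq_of_natDegree_le (h a (mem_insert_self a s))
        ((natDegree_prod_le _ _).trans (Finset.sum_le_sum fun i hi => h i (mem_insert_of_mem hi))),
      ih fun i hi => h i (mem_insert_of_mem hi)]

lemma sum_sub_of_le {n : ℕ} (f g : Fin n → ℕ) (h : ∀ i, g i ≤ f i) :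
    ∑ i : Fin n, (f i - g i) = (∑ i : Fin n, f i) - ∑ i : Fin n, g i := by
  have h2 : ∑ i : Fin n, g i ≤ ∑ i : Fin n, f i := Finset.sum_le_sum fun i _ => h i
  have : ∑ i : Fin n, (f i - g i) + ∑ i : Fin n, g i = ∑ i : Fin n, f i := by
    rw [← Finset.sum_add_distrib]
    exact Finset.sum_congr rfl fun i _ => by have := h i; omega
  omega

lemma wronskian_ne_zero_of_strictMono {s : ℕ} (g : Fin s → K[X]) (h0 : ∀ p, g p ≠ 0)
    (hd : StrictMono fun p => (g p).natDegree) :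
    (Matrix.of fun p i : Fin s => derivative^[(i : ℕ)] (g p)).det ≠ 0 := by
  classical
  set d : Fin s → ℕ := fun p => (g p).natDegree with hdd
  have hle : ∀ p : Fin s, (p : ℕ) ≤ d p := le_of_strictMono d hd
  set N := ∑ p : Fin s, (d p - (p : ℕ)) with hN
  intro hdet0
  have hcoeff : (Matrix.of fun p i : Fin s => derivative^[(i : ℕ)] (g p)).det.coeff N = 0 := by
    rw [hdet0]; simp
  rw [Matrix.det_apply'] at hcoeff
  have key : ∀ σ : Equiv.Perm (Fin s),
      (∏ i : Fin s, (Matrix.of fun p i : Fin s => derivative^[(i : ℕ)] (g p)) (σ i) i).coeff N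
        = ∏ i : Fin s, ((d (σ i)).descFactorial (i : ℕ) : K) * (g (σ i)).leadingCoeff := by
    intro σ
    simp only [Matrix.of_apply]
    by_cases hbad : ∃ i : Fin s, d (σ i) < (i : ℕ)
    · obtain ⟨i, hi⟩ := hbad
      have hz : derivative^[(i : ℕ)] (g (σ i)) = 0 := iterate_derivative_eq_zero hi
      rw [Finset.prod_eq_zero (mem_univ i) hz, Polynomial.coeff_zero]
      rw [Finset.prod_eq_zero (mem_univ i)]
      rw [Nat.descFactorial_eq_zero_iff_lt.mpr hi]
      simp
    · push_neg at hbad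
      have hsum : ∑ i : Fin s, (d (σ i) - (i : ℕ)) = N := by
        rw [hN, sum_sub_of_le _ _ hbad, sum_sub_of_le _ _ hle,
          Equiv.sum_comp σ d]
      rw [← hsum, coeff_prod_at _ _ _
        (fun i _ => (natDegree_iterate_derivative _ _).trans (Nat.sub_le_sub_right le_rfl _))]
      refine Finset.prod_congr rfl fun i _ => ?_
      rw [coeff_iterate_derivative]
      have hci : d (σ i) - (i : ℕ) + (i : ℕ) = d (σ i) := Nat.sub_add_cancel (hbad i)
      rw [hci]
      rw [nsmul_eq_mul]
      rfl
  rw [Polynomial.finset_sum_coeff] at hcoeff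
  rw [Finset.sum_congr rfl (fun σ _ => by
      rw [Polynomial.coeff_intCast_mul, key σ])] at hcoeff
  have hdet : (Matrix.of fun p i : Fin s =>
      ((d p).descFactorial (i : ℕ) : K) * (g p).leadingCoeff).det = 0 := by
    rw [Matrix.det_apply']
    exact hcoeff
  have hB : (Matrix.of fun p i : Fin s =>
      ((d p).descFactorial (i : ℕ) : K) * (g p).leadingCoeff)
      = Matrix.of fun p i : Fin s => (g p).leadingCoeff *
          ((descPochhammer K (i : ℕ)).eval ((d p : ℕ) : K)) := by
    ext p i
    rw [Matrix.of_apply, Matrix.of_apply, descPochhammer_eval_eq_descFactorial, mul_comm]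
  rw [hB, Matrix.det_mul_column (fun p => (g p).leadingCoeff)
    (fun p i : Fin s => (descPochhammer K (i : ℕ)).eval ((d p : ℕ) : K))] at hdet
  have hV : (Matrix.vandermonde (fun p : Fin s => ((d p : ℕ) : K))).det
      = (Matrix.of fun p i : Fin s => (descPochhammer K (i : ℕ)).eval ((d p : ℕ) : K)).det := by
    exact Matrix.det_eval_matrixOfPolynomials_eq_det_vandermonde _ _
      (fun i => descPochhammer_natDegree K (i : ℕ)) (fun i => monic_descPochhammer K (i : ℕ))
  rcases mul_eq_zero.mp hdet with h | h
  · exact (Finset.prod_ne_zero_iff.mpr fun p _ => leadingCoeff_ne_zero.mpr (h0 p)) h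
  · have hinj : Function.Injective fun p : Fin s => ((d p : ℕ) : K) :=
      fun p q hpq => hd.injective (Nat.cast_injective hpq)
    apply Matrix.det_vandermonde_ne_zero_iff.mpr hinj
    rw [hV]
    exact h

lemma wronskian_ne_zero {s : ℕ} (g : Fin s → K[X]) (hg : LinearIndependent K g) :
    (Matrix.of fun p i : Fin s => derivative^[(i : ℕ)] (g p)).det ≠ 0 := by
  classical
  have H : ∀ n : ℕ, ∀ g : Fin s → K[X], (∑ p, (g p).natDegree) = n →
      LinearIndependent K g →
      (Matrix.of fun p i : Fin s => derivative^[(i : ℕ)] (g p)).det ≠ 0 := by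
    intro n
    induction n using Nat.strong_induction_on with
    | _ n ih =>
      intro g hsum hg
      by_cases hinj : Function.Injective fun p => (g p).natDegree
      · -- sort and use the strictly monotone case
        set σ := Tuple.sort fun p => (g p).natDegree with hσ
        have hmono : Monotone ((fun p => (g p).natDegree) ∘ σ) := Tuple.monotone_sort _
        have hsm : StrictMono fun p => ((g ∘ σ) p).natDegree :=
          hmono.strictMono_of_injective (hinj.comp σ.injective)
        have h1 := wronskian_ne_zero_of_strictMono (g ∘ σ)
          (fun p => hg.ne_zero _) hsm
        intro H0
        apply h1
        have h2 : (Matrix.of fun p i : Fin s => derivative^[(i : ℕ)] ((g ∘ σ) p))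
            = (Matrix.of fun p i : Fin s => derivative^[(i : ℕ)] (g p)).submatrix σ id := rfl
        rw [h2, Matrix.det_permute, H0, mul_zero]
      · -- two equal degrees: reduce
        obtain ⟨p, r, hpr, hne⟩ := Function.not_injective_iff.mp hinj
        have hgp0 : g p ≠ 0 := hg.ne_zero p
        have hgr0 : g r ≠ 0 := hg.ne_zero r
        set cc : K := (g r).leadingCoeff / (g p).leadingCoeff with hcc
        have hccne : cc ≠ 0 :=
          div_ne_zero (leadingCoeff_ne_zero.mpr hgr0) (leadingCoeff_ne_zero.mpr hgp0)
        set g' : Fin s → K[X] := Function.update g r (g r - cc • g p) with hg'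
        have hg'r : g' r = g r - cc • g p := Function.update_self _ _ _
        have hg'ne : ∀ x, x ≠ r → g' x = g x := fun x hx => Function.update_of_ne hx _ _
        -- sum identity
        have hkey : ∀ lam : Fin s → K,
            ∑ x, lam x • g' x = (∑ x, lam x • g x) - (lam r * cc) • g p := by
          intro lam
          rw [← Finset.sum_erase_add _ _ (mem_univ r),
              ← Finset.sum_erase_add _ (fun x => lam x • g x) (mem_univ r)]
          rw [Finset.sum_congr rfl (fun x hx => by rw [hg'ne x (Finset.ne_of_mem_erase hx)])]
          rw [hg'r, smul_sub, smul_smul]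
          abel
        -- no nontrivial relations for g'
        have hlin' : ∀ lam : Fin s → K, (∑ x, lam x • g' x = 0) → ∀ x, lam x = 0 := by
          intro lam hlam
          set mu : Fin s → K := fun x => if x = p then lam p - lam r * cc else lam x with hmu
          have hmusum : ∑ x, mu x • g x = 0 := by
            have h1 : ∑ x, mu x • g x = (∑ x, lam x • g x) - (lam r * cc) • g p := by
              rw [← Finset.sum_erase_add _ _ (mem_univ p),
                ← Finset.sum_erase_add _ (fun x => lam x • g x) (mem_univ p)]
              have h2 : ∀ x ∈ univ.erase p, mu x • g x = lam x • g x := fun x hx => by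
                simp only [hmu, if_neg (Finset.ne_of_mem_erase hx)]
              rw [Finset.sum_congr rfl h2]
              have h3 : mu p = lam p - lam r * cc := by simp [hmu]
              rw [h3, sub_smul]
              abel
            rw [h1, ← hkey lam, hlam]
          have hmu0 := Fintype.linearIndependent_iff.mp hg mu hmusum
          have hr0 : lam r = 0 := by
            have h4 := hmu0 r
            simp only [hmu, if_neg (Ne.symm hne)] at h4
            exact h4
          intro x
          by_cases hx : x = p
          · rw [hx]
            have hp0 := hmu0 p
            simp only [hmu, if_pos rfl, hr0] at hp0
            simpa using hp0
          · have h5 := hmu0 x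
            simp only [hmu, if_neg hx] at h5
            exact h5
        have hfin : LinearIndependent K g' := Fintype.linearIndependent_iff.mpr hlin'
        have hg'r0 : g' r ≠ 0 := by
          intro H0
          have := hlin' (fun x => if x = r then 1 else 0) (by
            rw [Finset.sum_congr rfl (fun x _ => by
              rw [ite_smul, one_smul, zero_smul]),
              Finset.sum_ite_eq' univ r g', if_pos (mem_univ r), H0])
          simpa using this r
        -- degree decrease
        have hdegq : (cc • g p).degree = (g r).degree := by
          rw [smul_eq_C_mul, degree_C_mul hccne, degree_eq_natDegree hgp0,
            degree_eq_natDegree hgr0, hpr]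
        have hlcq : (cc • g p).leadingCoeff = (g r).leadingCoeff := by
          rw [smul_eq_C_mul, leadingCoeff_mul, leadingCoeff_C, hcc,
            div_mul_cancel₀ _ (leadingCoeff_ne_zero.mpr hgp0)]
        have hdlt : (g' r).natDegree < (g r).natDegree := by
          apply natDegree_lt_natDegree hg'r0
          rw [hg'r]
          exact degree_sub_lt hdegq.symm hgr0 hlcq.symm
        have hsum' : ∑ x, (g' x).natDegree < n := by
          rw [← hsum, ← Finset.sum_erase_add _ _ (mem_univ r),
            ← Finset.sum_erase_add _ (fun x => (g x).natDegree) (mem_univ r),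
            Finset.sum_congr rfl (fun x hx => by rw [hg'ne x (Finset.ne_of_mem_erase hx)])]
          omega
        have hdet' := ih _ hsum' g' rfl hfin
        intro H0
        apply hdet'
        have hMM : (Matrix.of fun q i : Fin s => derivative^[(i : ℕ)] (g' q))
            = (Matrix.of fun q i : Fin s => derivative^[(i : ℕ)] (g q)).updateRow r
              ((Matrix.of fun q i : Fin s => derivative^[(i : ℕ)] (g q)) r
                + (-(C cc)) • (Matrix.of fun q i : Fin s => derivative^[(i : ℕ)] (g q)) p) := by
          ext x i
          by_cases hx : x = r
          · subst hx
            rw [Matrix.updateRow_self]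
            simp only [Matrix.of_apply, Pi.add_apply, Pi.smul_apply, smul_eq_mul, hg'r]
            rw [iterate_derivative_sub, iterate_derivative_smul, smul_eq_C_mul]
            ring
          · rw [Matrix.updateRow_ne hx]
            simp only [Matrix.of_apply, hg'ne x hx]
        rw [hMM, Matrix.det_updateRow_add_smul_self _ (Ne.symm hne) (-(C cc)), H0]
  exact H _ g rfl hg

lemma X_mul_derivative_X_pow (n : ℕ) : (X : K[X]) * derivative (X ^ n) = (n : K[X]) * X ^ n := by
  cases n with
  | zero => simp
  | succ m =>
    rw [derivative_X_pow, Nat.succ_sub_one, C_eq_natCast]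
    ring

lemma mul_derivative_pow (p : K[X]) (n : ℕ) :
    p * derivative (p ^ n) = (n : K[X]) * p ^ n * derivative p := by
  cases n with
  | zero => simp
  | succ m =>
    rw [derivative_pow, Nat.succ_sub_one, C_eq_natCast]
    ring

lemma Z_mul_derivative_f (u v w t : K) (a b c : ℕ) :
    (X * (C u * X + C v) * (C w * X + C t)) *
        derivative (X ^ a * (C u * X + C v) ^ b * (C w * X + C t) ^ c) =
      (X ^ a * (C u * X + C v) ^ b * (C w * X + C t) ^ c) *
        ((a : K[X]) * (C u * X + C v) * (C w * X + C t)
          + (b : K[X]) * (C u * X) * (C w * X + C t)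
          + (c : K[X]) * (C w * X) * (C u * X + C v)) := by
  have ha := X_mul_derivative_X_pow (K := K) a
  have hb := mul_derivative_pow (C u * X + C v) b
  have hc := mul_derivative_pow (C w * X + C t) c
  rw [show derivative (C u * X + C v) = C u by simp] at hb
  rw [show derivative (C w * X + C t) = C w by simp] at hc
  rw [derivative_mul, derivative_mul]
  linear_combination ((C u * X + C v) ^ (b + 1) * (C w * X + C t) ^ (c + 1)) * ha
    + (X ^ (a + 1) * (C w * X + C t) ^ (c + 1)) * hb
    + (X ^ (a + 1) * (C u * X + C v) ^ (b + 1)) * hc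

lemma jet (u v w t : K) (a b c : ℕ) (i : ℕ) :
    ∃ q : K[X], q.natDegree ≤ 2 * i ∧
      (X * (C u * X + C v) * (C w * X + C t)) ^ i *
          derivative^[i] (X ^ a * (C u * X + C v) ^ b * (C w * X + C t) ^ c) =
        X ^ a * (C u * X + C v) ^ b * (C w * X + C t) ^ c * q := by
  induction i with
  | zero => exact ⟨1, by simp, by simp⟩
  | succ i ih =>
    obtain ⟨q, hqdeg, hq⟩ := ih
    refine ⟨((a : K[X]) * (C u * X + C v) * (C w * X + C t)
          + (b : K[X]) * (C u * X) * (C w * X + C t)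
          + (c : K[X]) * (C w * X) * (C u * X + C v)) * q
        + (X * (C u * X + C v) * (C w * X + C t)) * derivative q
        - (i : K[X]) * derivative (X * (C u * X + C v) * (C w * X + C t)) * q, ?_, ?_⟩
    · -- degree bound
      have hZ : (X * (C u * X + C v) * (C w * X + C t) : K[X]).natDegree ≤ 3 := by
        compute_degree
      have hh : ((a : K[X]) * (C u * X + C v) * (C w * X + C t)
          + (b : K[X]) * (C u * X) * (C w * X + C t)
          + (c : K[X]) * (C w * X) * (C u * X + C v)).natDegree ≤ 2 := by
        compute_degree
      have hdZ : (derivative (X * (C u * X + C v) * (C w * X + C t)) : K[X]).natDegree ≤ 2 := by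
        refine (natDegree_derivative_le _).trans ?_
        omega
      have h1 : (((a : K[X]) * (C u * X + C v) * (C w * X + C t)
          + (b : K[X]) * (C u * X) * (C w * X + C t)
          + (c : K[X]) * (C w * X) * (C u * X + C v)) * q).natDegree ≤ 2 * (i + 1) :=
        (natDegree_mul_le).trans (by omega)
      have h2 : ((X * (C u * X + C v) * (C w * X + C t)) * derivative q).natDegree
          ≤ 2 * (i + 1) := by
        rcases Nat.eq_zero_or_pos i with h0 | hpos
        · have : q.natDegree = 0 := by omega
          rw [eq_C_of_natDegree_le_zero this.le, derivative_C, mul_zero]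
          simp
        · have hdq : (derivative q).natDegree ≤ 2 * i - 1 := by
            have := natDegree_derivative_le q
            omega
          refine (natDegree_mul_le).trans ((add_le_add hZ hdq).trans (by omega))
      have h3 : ((i : K[X]) * derivative (X * (C u * X + C v) * (C w * X + C t)) * q).natDegree
          ≤ 2 * (i + 1) := by
        refine (natDegree_mul_le).trans ?_
        have h4 : ((i : K[X]) * derivative (X * (C u * X + C v) * (C w * X + C t))).natDegree ≤ 2 :=
          (natDegree_mul_le).trans (le_trans (add_le_add (natDegree_natCast i).le hdZ) (by omega))
        omega
      refine (natDegree_sub_le _ _).trans ?_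
      refine max_le ((natDegree_add_le _ _).trans (max_le h1 h2)) h3
    · have hD := congrArg derivative hq
      rw [derivative_mul, derivative_mul] at hD
      have hZZ := mul_derivative_pow (X * (C u * X + C v) * (C w * X + C t) : K[X]) i
      have hfh := Z_mul_derivative_f u v w t a b c
      rw [Function.iterate_succ_apply', pow_succ]
      linear_combination (X * (C u * X + C v) * (C w * X + C t)) * hD
        - (derivative^[i] (X ^ a * (C u * X + C v) ^ b * (C w * X + C t) ^ c)) * hZZ
        + q * hfh
        - ((i : K[X]) * derivative (X * (C u * X + C v) * (C w * X + C t))) * hq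

end Stmt13

open Polynomial Stmt13 in
theorem stmt13 {K : Type*} [Field K] [CharZero K] (k : ℕ)
    (a : Fin k → K) (α β γ : Fin k → ℕ) (hα : Monotone α)
    (u v w t : K) (hu : u ≠ 0) (hv : v ≠ 0) (hw : w ≠ 0) (ht : t ≠ 0)
    (P : K[X])
    (hPdef : P = ∑ j, C (a j) * X ^ (α j) * (C u * X + C v) ^ (β j) * (C w * X + C t) ^ (γ j))
    (hP : P ≠ 0) :
    ∃ j : Fin k, P.rootMultiplicity 0 ≤ α j + 2 * (k - (j : ℕ)).choose 2 := by
  classical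
  set F : Fin k → K[X] :=
    fun j => X ^ (α j) * (C u * X + C v) ^ (β j) * (C w * X + C t) ^ (γ j) with hF
  have hPdef' : P = ∑ j, C (a j) * F j := by
    rw [hPdef]; exact Finset.sum_congr rfl fun j _ => by rw [hF]; ring
  have hUne : (C u * X + C v : K[X]) ≠ 0 := fun H => hv (by simpa using congrArg (eval 0) H)
  have hVne : (C w * X + C t : K[X]) ≠ 0 := fun H => ht (by simpa using congrArg (eval 0) H)
  have hF0 : ∀ j, F j ≠ 0 := fun j =>
    mul_ne_zero (mul_ne_zero (pow_ne_zero _ X_ne_zero) (pow_ne_zero _ hUne)) (pow_ne_zero _ hVne)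
  have hXdvdF : ∀ j, (X : K[X]) ^ (α j) ∣ F j := fun j =>
    ⟨(C u * X + C v) ^ (β j) * (C w * X + C t) ^ (γ j), by simp only [hF]; ring⟩
  -- minimal support representation
  have hex : ∃ n : ℕ, ∃ S : Finset (Fin k), S.card = n ∧ ∃ c : Fin k → K,
      P = ∑ j ∈ S, C (c j) * F j :=
    ⟨k, Finset.univ, by simp, a, by simpa using hPdef'⟩
  obtain ⟨S, hScard, c, hrep⟩ := Nat.find_spec hex
  set n0 := Nat.find hex with hn0
  have hmin : ∀ S' : Finset (Fin k), S'.card < n0 → ∀ c' : Fin k → K,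
      P ≠ ∑ j ∈ S', C (c' j) * F j := by
    intro S' hlt c' heq
    exact Nat.find_min hex hlt ⟨S', rfl, c', heq⟩
  have hSne : S.Nonempty := by
    rcases S.eq_empty_or_nonempty with h | h
    · exfalso; apply hP; rw [hrep, h, Finset.sum_empty]
    · exact h
  have hn0pos : 0 < n0 := hScard ▸ Finset.card_pos.mpr hSne
  have hc : ∀ j ∈ S, c j ≠ 0 := by
    intro j hj hcj
    refine hmin (S.erase j) ?_ c ?_
    · rw [Finset.card_erase_of_mem hj, hScard]; omega
    · rw [hrep, Finset.sum_erase _ (by rw [hcj, map_zero, zero_mul])]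
  have hnorel : ∀ d : Fin k → K, (∑ j ∈ S, C (d j) * F j) = 0 → ∀ j ∈ S, d j = 0 := by
    intro d hd j0 hj0
    by_contra hdj0
    have key : P = ∑ j ∈ S, C (c j - c j0 / d j0 * d j) * F j := by
      rw [hrep]
      rw [Finset.sum_congr rfl (fun j (_ : j ∈ S) => show C (c j - c j0 / d j0 * d j) * F j
        = C (c j) * F j - C (c j0 / d j0) * (C (d j) * F j) by rw [C_sub, C_mul]; ring),
        Finset.sum_sub_distrib, ← Finset.mul_sum, hd, mul_zero, sub_zero]
    refine hmin (S.erase j0) ?_ (fun j => c j - c j0 / d j0 * d j) ?_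
    · rw [Finset.card_erase_of_mem hj0, hScard]; omega
    · rw [key, Finset.sum_erase _ (by
        show C (c j0 - c j0 / d j0 * d j0) * F j0 = 0
        rw [div_mul_cancel₀ _ hdj0, sub_self, map_zero, zero_mul])]
  -- pass to Fin n0
  set e := S.orderEmbOfFin hScard with he
  have hSmap : S = Finset.univ.map e.toEmbedding := by
    symm
    apply Finset.eq_of_subset_of_card_le
    · intro j hj
      obtain ⟨p, _, rfl⟩ := Finset.mem_map.mp hj
      exact S.orderEmbOfFin_mem hScard p
    · rw [hScard, Finset.card_map, Finset.card_univ, Fintype.card_fin]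
  have hsumS : ∀ (G : Fin k → K[X]), ∑ j ∈ S, G j = ∑ p : Fin n0, G (e p) := by
    intro G; rw [hSmap, Finset.sum_map]; rfl
  set g : Fin n0 → K[X] := fun p => F (e p) with hg
  set cp : Fin n0 → K := fun p => c (e p) with hcp
  have hPg : P = ∑ p, C (cp p) * g p := hrep.trans (hsumS _)
  set z0 : Fin n0 := ⟨0, hn0pos⟩ with hz0
  have hgind : LinearIndependent K g := by
    rw [Fintype.linearIndependent_iff]
    intro lam hlam p
    set d : Fin k → K := fun j => if h : ∃ p', e p' = j then lam h.choose else 0 with hd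
    have hde : ∀ p' : Fin n0, d (e p') = lam p' := by
      intro p'
      have hex' : ∃ p'', e p'' = e p' := ⟨p', rfl⟩
      simp only [hd, dif_pos hex']
      congr 1
      exact e.injective hex'.choose_spec
    have h0 : ∑ j ∈ S, C (d j) * F j = 0 := by
      rw [hsumS]
      rw [Finset.sum_congr rfl (fun p' (_ : p' ∈ Finset.univ) => show C (d (e p')) * F (e p')
        = lam p' • g p' by rw [hde, smul_eq_C_mul, hg])]
      exact hlam
    have := hnorel d h0 (e p) (S.orderEmbOfFin_mem hScard p)
    rw [← hde p]
    exact this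
  -- Wronskian matrices
  set M : Matrix (Fin n0) (Fin n0) K[X] := Matrix.of fun p i => derivative^[(i : ℕ)] (g p) with hM
  have hdetM : M.det ≠ 0 := wronskian_ne_zero g hgind
  set row0 : Fin n0 → K[X] := fun i => derivative^[(i : ℕ)] P with hrow0
  have hrowsum : row0 = ∑ p, (C (cp p)) • M p := by
    funext i
    rw [hrow0]
    show derivative^[(i : ℕ)] P = _
    rw [hPg, iterate_derivative_sum]
    rw [Finset.sum_apply]
    refine Finset.sum_congr rfl fun p _ => ?_
    rw [Pi.smul_apply, smul_eq_mul]
    show derivative^[(i : ℕ)] (C (cp p) * g p) = C (cp p) * derivative^[(i : ℕ)] (g p)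
    rw [iterate_derivative_C_mul]
  set M' : Matrix (Fin n0) (Fin n0) K[X] := M.updateRow z0 row0 with hM'
  have hdetM' : M'.det = C (cp z0) * M.det := by
    rw [hM', hrowsum]
    rw [Matrix.det_updateRow_sum M z0 (fun p => C (cp p))]
    rw [smul_eq_mul]
  have hdetM'ne : M'.det ≠ 0 := by
    rw [hdetM']
    exact mul_ne_zero (fun H => hc (e z0) (S.orderEmbOfFin_mem hScard z0)
      (by simpa using congrArg (eval 0) H)) hdetM
  -- jets
  have hjets := fun (p : Fin n0) (i : ℕ) => jet u v w t (α (e p)) (β (e p)) (γ (e p)) i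
  choose Q hQdeg hQeq using hjets
  set T2 := ∑ i : Fin n0, (i : ℕ) with hT2
  have hF3 : (X * (C u * X + C v) * (C w * X + C t)) ^ T2 * M.det
      = (∏ p, g p) * (Matrix.of fun p i : Fin n0 => Q p (i : ℕ)).det := by
    have e1 : (X * (C u * X + C v) * (C w * X + C t)) ^ T2 * M.det
        = (∏ i : Fin n0, (X * (C u * X + C v) * (C w * X + C t)) ^ (i : ℕ)) * M.det := by
      rw [Finset.prod_pow_eq_pow_sum]
    rw [e1, ← Matrix.det_mul_row (fun i : Fin n0 => (X * (C u * X + C v) * (C w * X + C t)) ^ (i : ℕ)) M]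
    have e2 : (Matrix.of fun p i : Fin n0 =>
          (X * (C u * X + C v) * (C w * X + C t)) ^ (i : ℕ) * M p i)
        = Matrix.of fun p i : Fin n0 => g p * Q p (i : ℕ) := by
      apply Matrix.ext
      intro p i
      exact hQeq p (i : ℕ)
    rw [e2, Matrix.det_mul_column (fun p => g p) (fun p i : Fin n0 => Q p (i : ℕ))]
    rfl
  set detQ := (Matrix.of fun p i : Fin n0 => Q p (i : ℕ)).det with hdetQ
  have hZne : (X * (C u * X + C v) * (C w * X + C t) : K[X]) ≠ 0 :=
    mul_ne_zero (mul_ne_zero X_ne_zero hUne) hVne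
  have hgne : ∀ p, g p ≠ 0 := fun p => hF0 (e p)
  have hdetQne : detQ ≠ 0 := by
    intro H
    rw [H, mul_zero] at hF3
    exact (mul_ne_zero (pow_ne_zero _ hZne) hdetM) hF3
  have hdetQdeg : detQ.natDegree ≤ 2 * T2 := by
    rw [hdetQ, Matrix.det_apply']
    apply natDegree_sum_le_of_forall_le
    intro σ _
    refine (natDegree_mul_le).trans ?_
    rw [natDegree_intCast, zero_add]
    refine (natDegree_prod_le _ _).trans ?_
    calc ∑ i : Fin n0, ((Matrix.of fun p i : Fin n0 => Q p (i : ℕ)) (σ i) i).natDegree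
        ≤ ∑ i : Fin n0, 2 * (i : ℕ) := Finset.sum_le_sum fun i _ => hQdeg (σ i) (i : ℕ)
      _ = 2 * T2 := by rw [hT2, Finset.mul_sum]
  -- lower bound on valuation of det M'
  set m := P.rootMultiplicity 0 with hm
  have hmdvd : (X : K[X]) ^ m ∣ P := by
    have := P.pow_rootMultiplicity_dvd 0
    simpa using this
  set Sa := ∑ p ∈ Finset.univ.erase z0, α (e p) with hSa
  have hF5 : (X : K[X]) ^ ((m + Sa) - T2) ∣ M'.det := by
    rw [Matrix.det_apply']
    apply Finset.dvd_sum
    intro σ _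
    apply Dvd.dvd.mul_left
    set i0 := σ⁻¹ z0 with hi0
    have hσi0 : σ i0 = z0 := by rw [hi0]; simp
    have hdvd : ∀ i : Fin n0,
        (X : K[X]) ^ (if i = i0 then m - (i0 : ℕ) else α (e (σ i)) - (i : ℕ)) ∣ M' (σ i) i := by
      intro i
      by_cases hii : i = i0
      · rw [if_pos hii, hii, hσi0]
        have h6 : M' z0 i0 = derivative^[(i0 : ℕ)] P := by
          rw [hM', Matrix.updateRow_self, hrow0]
        rw [h6]
        exact X_pow_dvd_iterate_derivative _ _ _ hmdvd
      · rw [if_neg hii]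
        have hne : σ i ≠ z0 := fun h => hii (by rw [hi0, ← h, Equiv.Perm.inv_def, Equiv.symm_apply_apply])
        have : M' (σ i) i = derivative^[(i : ℕ)] (g (σ i)) := by
          rw [hM', Matrix.updateRow_ne hne]; rfl
        rw [this]
        exact X_pow_dvd_iterate_derivative _ _ _ (hXdvdF (e (σ i)))
    have h1 : ∏ i, (X : K[X]) ^ (if i = i0 then m - (i0 : ℕ) else α (e (σ i)) - (i : ℕ))
        ∣ ∏ i, M' (σ i) i := Finset.prod_dvd_prod_of_dvd _ _ fun i _ => hdvd i
    rw [Finset.prod_pow_eq_pow_sum] at h1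
    refine dvd_trans (pow_dvd_pow X ?_) h1
    -- arithmetic
    have hsplit : ∑ i : Fin n0, (if i = i0 then m - (i0 : ℕ) else α (e (σ i)) - (i : ℕ))
        = (m - (i0 : ℕ)) + ∑ i ∈ Finset.univ.erase i0, (α (e (σ i)) - (i : ℕ)) := by
      rw [← Finset.add_sum_erase _ _ (Finset.mem_univ i0), if_pos rfl]
      congr 1
      exact Finset.sum_congr rfl fun i hi => if_neg (Finset.ne_of_mem_erase hi)
    have hsub : (∑ i ∈ Finset.univ.erase i0, α (e (σ i)))
          - (∑ i ∈ Finset.univ.erase i0, (i : ℕ))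
        ≤ ∑ i ∈ Finset.univ.erase i0, (α (e (σ i)) - (i : ℕ)) := sum_tsub_le _ _ _
    have himg : (Finset.univ.erase i0).image σ = Finset.univ.erase z0 := by
      rw [Finset.image_erase σ.injective, hσi0]
      congr 1
      apply Finset.eq_univ_of_forall
      intro x
      exact Finset.mem_image.mpr ⟨σ⁻¹ x, Finset.mem_univ _, by simp⟩
    have hre : ∑ i ∈ Finset.univ.erase i0, α (e (σ i)) = Sa := by
      rw [hSa, ← himg, Finset.sum_image (fun x _ y _ h => σ.injective h)]
    have hiT : (i0 : ℕ) + ∑ i ∈ Finset.univ.erase i0, (i : ℕ) = T2 :=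
      Finset.add_sum_erase _ _ (Finset.mem_univ i0)
    omega
  -- upper bound via hF3
  have hTT : (m + Sa) - T2 ≤ M'.det.rootMultiplicity 0 := by
    rw [le_rootMultiplicity_iff hdetM'ne]
    simpa using hF5
  have hUVne : ((C u * X + C v) * (C w * X + C t) : K[X]) ≠ 0 := mul_ne_zero hUne hVne
  have hZval : ((X * (C u * X + C v) * (C w * X + C t) : K[X]) ^ T2).rootMultiplicity 0 = T2 := by
    have hXpow : ((X : K[X]) ^ T2).rootMultiplicity 0 = T2 := by
      have h7 := rootMultiplicity_X_sub_C_pow (R := K) 0 T2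
      simpa using h7
    have hsp : (X * (C u * X + C v) * (C w * X + C t) : K[X]) ^ T2
        = (X : K[X]) ^ T2 * ((C u * X + C v) * (C w * X + C t)) ^ T2 := by
      rw [mul_pow, mul_pow, mul_pow, mul_assoc]
    rw [hsp, rootMultiplicity_mul
      (mul_ne_zero (pow_ne_zero _ X_ne_zero) (pow_ne_zero _ hUVne)), hXpow]
    have h8 : ((((C u * X + C v) * (C w * X + C t)) : K[X]) ^ T2).rootMultiplicity 0 = 0 := by
      apply rootMultiplicity_eq_zero
      simp only [IsRoot, eval_pow, eval_mul, eval_add, eval_C, eval_X, mul_zero, zero_add]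
      exact pow_ne_zero _ (mul_ne_zero hv ht)
    rw [h8, add_zero]
  have hprodg : ∏ p, g p = (X : K[X]) ^ (∑ p, α (e p))
      * ∏ p, ((C u * X + C v) ^ (β (e p)) * (C w * X + C t) ^ (γ (e p))) := by
    rw [← Finset.prod_pow_eq_pow_sum, ← Finset.prod_mul_distrib]
    exact Finset.prod_congr rfl fun p _ => by simp only [hg, hF]; ring
  have hrestne : (∏ p, ((C u * X + C v) ^ (β (e p)) * (C w * X + C t) ^ (γ (e p))) : K[X]) ≠ 0 :=
    Finset.prod_ne_zero_iff.mpr fun p _ => mul_ne_zero (pow_ne_zero _ hUne) (pow_ne_zero _ hVne)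
  have hGval : (∏ p, g p).rootMultiplicity 0 = α (e z0) + Sa := by
    rw [hprodg, rootMultiplicity_mul (mul_ne_zero (pow_ne_zero _ X_ne_zero) hrestne)]
    have hXpow : ((X : K[X]) ^ (∑ p, α (e p))).rootMultiplicity 0 = ∑ p, α (e p) := by
      have h7 := rootMultiplicity_X_sub_C_pow (R := K) 0 (∑ p, α (e p))
      simpa using h7
    have h8 : (∏ p, ((C u * X + C v) ^ (β (e p)) * (C w * X + C t) ^ (γ (e p)))
        : K[X]).rootMultiplicity 0 = 0 := by
      apply rootMultiplicity_eq_zero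
      simp only [IsRoot, eval_prod, eval_pow, eval_mul, eval_add, eval_C, eval_X,
        mul_zero, zero_add]
      exact Finset.prod_ne_zero_iff.mpr fun p _ =>
        mul_ne_zero (pow_ne_zero _ hv) (pow_ne_zero _ ht)
    rw [hXpow, h8, add_zero, ← Finset.add_sum_erase _ _ (Finset.mem_univ z0)]
  have hCz0 : cp z0 ≠ 0 := hc (e z0) (S.orderEmbOfFin_mem hScard z0)
  have hCval : (C (cp z0)).rootMultiplicity 0 = 0 := by
    apply rootMultiplicity_eq_zero
    simp only [IsRoot, eval_C]
    exact hCz0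
  have hEq : (X * (C u * X + C v) * (C w * X + C t)) ^ T2 * M'.det
      = C (cp z0) * ((∏ p, g p) * detQ) := by
    rw [hdetM']
    calc (X * (C u * X + C v) * (C w * X + C t)) ^ T2 * (C (cp z0) * M.det)
        = C (cp z0) * ((X * (C u * X + C v) * (C w * X + C t)) ^ T2 * M.det) := by ring
      _ = C (cp z0) * ((∏ p, g p) * detQ) := by rw [hF3]
  have hgprodne : (∏ p, g p) ≠ 0 := Finset.prod_ne_zero_iff.mpr fun p _ => hgne p
  have hval : T2 + M'.det.rootMultiplicity 0 = (α (e z0) + Sa) + detQ.rootMultiplicity 0 := by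
    have h9 := congrArg (rootMultiplicity 0) hEq
    rw [rootMultiplicity_mul (mul_ne_zero (pow_ne_zero _ hZne) hdetM'ne),
      rootMultiplicity_mul (mul_ne_zero (C_ne_zero.mpr hCz0) (mul_ne_zero hgprodne hdetQne)),
      rootMultiplicity_mul (mul_ne_zero hgprodne hdetQne),
      hZval, hGval, hCval, zero_add] at h9
    exact h9
  have hQval : detQ.rootMultiplicity 0 ≤ 2 * T2 := by
    have hd : (X : K[X]) ^ (detQ.rootMultiplicity 0) ∣ detQ := by
      simpa using detQ.pow_rootMultiplicity_dvd 0
    have h10 := natDegree_le_of_dvd hd hdetQne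
    rw [natDegree_X_pow] at h10
    omega
  have hT2c : T2 = n0.choose 2 := by
    rw [hT2, Fin.sum_univ_eq_sum_range (fun i => i) n0, Finset.sum_range_id,
      Nat.choose_two_right]
  have hclose : n0 ≤ k - (e z0 : ℕ) := by
    have hsub : S ⊆ Finset.Ici (e z0) := by
      intro j hj
      obtain ⟨p, _, rfl⟩ := Finset.mem_map.mp (hSmap ▸ hj)
      exact Finset.mem_Ici.mpr (e.monotone (by simp [hz0, Fin.le_def]))
    have h11 := Finset.card_le_card hsub
    rwa [hScard, Fin.card_Ici] at h11
  have hchoose : n0.choose 2 ≤ (k - (e z0 : ℕ)).choose 2 := Nat.choose_le_choose 2 hclose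
  exact ⟨e z0, by omega⟩
end

section
/- Let K be a field of characteristic p > 0 and f_1,...,f_k ∈ K[X]. Then f_1,...,f_k are linearly independent over the subring K[X^p] if and only if their Wronskian W(f_1,...,f_k) is nonzero. -/
open Polynomial

section Aux

variable {K : Type*} [Field K]

private lemma comp_X_pow_iff (p : ℕ) (hp : p.Prime) [CharP K p] (b : K[X]) :
    (∃ c : K[X], b = c.comp (X ^ p)) ↔ derivative b = 0 := by
  constructor
  · rintro ⟨c, rfl⟩
    rw [← Polynomial.expand_eq_comp_X_pow, Polynomial.derivative_expand]
    have h : ((p : ℕ) : K[X]) = 0 := by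
      rw [← Polynomial.C_eq_natCast, CharP.cast_eq_zero, map_zero]
    rw [h, zero_mul, mul_zero]
  · intro hb
    exact ⟨Polynomial.contract p b, by
      rw [← Polynomial.expand_eq_comp_X_pow, Polynomial.expand_contract p hb hp.ne_zero]⟩

private lemma mulVec_zero_of_det_ne {R : Type*} [CommRing R] [IsDomain R] {k : ℕ}
    {M : Matrix (Fin k) (Fin k) R} (hM : M.det ≠ 0) {b : Fin k → R}
    (h : M.mulVec b = 0) : b = 0 := by
  have h2 : M.det • b = 0 := by
    calc M.det • b = (M.det • (1 : Matrix (Fin k) (Fin k) R)).mulVec b := by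
          rw [Matrix.smul_mulVec, Matrix.one_mulVec]
      _ = M.adjugate.mulVec (M.mulVec b) := by
          rw [Matrix.mulVec_mulVec, Matrix.adjugate_mul]
      _ = 0 := by rw [h, Matrix.mulVec_zero]
  funext j
  have h3 := congrFun h2 j
  simp only [Pi.smul_apply, smul_eq_mul, Pi.zero_apply] at h3
  exact (mul_eq_zero.mp h3).resolve_left hM

private lemma sum_iterate {k : ℕ} (f : Fin k → K[X]) (b : Fin k → K[X])
    (hb : ∀ j, derivative (b j) = 0) (hs : ∑ j, b j * f j = 0) :
    ∀ m : ℕ, ∑ j, b j * derivative^[m] (f j) = 0 := by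
  intro m
  induction m with
  | zero => simpa using hs
  | succ m ih =>
    have h1 : derivative (∑ j, b j * derivative^[m] (f j)) = 0 := by rw [ih, map_zero]
    rw [map_sum] at h1
    simp only [derivative_mul, hb, zero_mul, zero_add] at h1
    simp only [Function.iterate_succ_apply']
    exact h1

private lemma exists_rel (p : ℕ) (hp : p.Prime) [CharP K p] :
    ∀ k (f : Fin k → K[X]), wronskian f = 0 →
      ∃ b : Fin k → K[X], (∀ j, derivative (b j) = 0) ∧ (∑ j, b j * f j = 0) ∧
        ∃ j, b j ≠ 0 := by
  intro k
  induction k with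
  | zero =>
    intro f hf
    exact absurd hf (by simp [_root_.wronskian, Matrix.det_fin_zero])
  | succ n ih =>
    intro f hW
    by_cases hw : wronskian (f ∘ Fin.castSucc) = 0
    · obtain ⟨b, hb1, hb2, j0, hj0⟩ := ih _ hw
      refine ⟨Fin.snoc b 0, ?_, ?_, ⟨j0.castSucc, by simpa using hj0⟩⟩
      · intro j
        induction j using Fin.lastCases with
        | last => simp
        | cast i => simpa using hb1 i
      · rw [Fin.sum_univ_castSucc]
        simpa using hb2
    · set M : Matrix (Fin (n+1)) (Fin (n+1)) K[X] :=
        Matrix.of (fun i j => derivative^[(i:ℕ)] (f j)) with hMdef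
      have hdetM : M.det = 0 := hW
      set a : Fin (n+1) → K[X] := fun j => M.adjugate j (Fin.last n) with ha
      have hrow : ∀ i, ∑ j, M i j * a j = 0 := by
        intro i
        have h0 : (M * M.adjugate) i (Fin.last n) = 0 := by
          rw [Matrix.mul_adjugate, hdetM, zero_smul]
          rfl
        rwa [Matrix.mul_apply] at h0
      have hsub : M.submatrix Fin.castSucc Fin.castSucc =
          Matrix.of (fun i j : Fin n => derivative^[(i:ℕ)] ((f ∘ Fin.castSucc) j)) := by
        ext i j
        simp [hMdef]
      have halast : a (Fin.last n) = wronskian (f ∘ Fin.castSucc) := by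
        show M.adjugate (Fin.last n) (Fin.last n) = _
        rw [Matrix.adjugate_fin_succ_eq_det_submatrix]
        rw [Fin.succAbove_last, hsub]
        have : ((-1 : K[X]) ^ ((Fin.last n : ℕ) + (Fin.last n : ℕ))) = 1 :=
          Even.neg_one_pow ⟨(Fin.last n : ℕ), rfl⟩
        rw [this, one_mul]
        rfl
      have hane : a (Fin.last n) ≠ 0 := by rw [halast]; exact hw
      have hdrow : ∀ i : Fin n, ∑ j, M i.castSucc j * derivative (a j) = 0 := by
        intro i
        have h0 : derivative (∑ j, M i.castSucc j * a j) = 0 := by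
          rw [hrow i.castSucc, map_zero]
        rw [map_sum] at h0
        have hder : ∀ j, derivative (M i.castSucc j) = M i.succ j := by
          intro j
          show derivative (derivative^[(i.castSucc : ℕ)] (f j)) =
            derivative^[(i.succ : ℕ)] (f j)
          rw [Fin.val_succ, Fin.coe_castSucc, Function.iterate_succ_apply']
        simp only [derivative_mul, hder] at h0
        rw [Finset.sum_add_distrib, hrow i.succ, zero_add] at h0
        exact h0
      set z : Fin (n+1) → K[X] :=
        fun j => a (Fin.last n) * derivative (a j) - derivative (a (Fin.last n)) * a j
        with hzdef
      have hzlast : z (Fin.last n) = 0 := by simp [hzdef, mul_comm]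
      have hzrow : ∀ i : Fin n, ∑ j, M i.castSucc j * z j = 0 := by
        intro i
        have he : ∀ j ∈ Finset.univ, M i.castSucc j * z j =
            a (Fin.last n) * (M i.castSucc j * derivative (a j)) -
              derivative (a (Fin.last n)) * (M i.castSucc j * a j) := by
          intro j _
          rw [hzdef]
          ring
        rw [Finset.sum_congr rfl he, Finset.sum_sub_distrib, ← Finset.mul_sum,
          ← Finset.mul_sum, hdrow i, hrow i.castSucc, mul_zero, mul_zero, sub_zero]
      have hdetS : (M.submatrix Fin.castSucc Fin.castSucc).det ≠ 0 := by
        rw [hsub]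
        exact hw
      have hSz : (M.submatrix Fin.castSucc Fin.castSucc).mulVec (z ∘ Fin.castSucc) = 0 := by
        funext i
        have h0 := hzrow i
        rw [Fin.sum_univ_castSucc, hzlast, mul_zero, add_zero] at h0
        simpa [Matrix.mulVec, dotProduct] using h0
      have hz0 : ∀ j, z j = 0 := by
        have h0 := mulVec_zero_of_det_ne hdetS hSz
        intro j
        induction j using Fin.lastCases with
        | last => exact hzlast
        | cast i => exact congrFun h0 i
      have hrel : ∀ j, a (Fin.last n) * derivative (a j) =
          derivative (a (Fin.last n)) * a j :=
        fun j => sub_eq_zero.mp (hz0 j)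
      obtain ⟨r, hr⟩ : ∃ r, p - 1 = r + 1 := ⟨p - 2, by have := hp.two_le; omega⟩
      have hc : ((r + 1 : ℕ) : K) = -1 := by
        have h2 : ((r + 1 + 1 : ℕ) : K) = 0 := by
          have hr' : r + 1 + 1 = p := by have := hp.two_le; omega
          rw [hr']
          exact CharP.cast_eq_zero K p
        push_cast at h2 ⊢
        linear_combination h2
      refine ⟨fun j => a j * a (Fin.last n) ^ (r + 1), ?_, ?_, ?_⟩
      · intro j
        have hd : derivative (a j * a (Fin.last n) ^ (r + 1)) =
            derivative (a j) * a (Fin.last n) ^ (r + 1) +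
              a j * (C ((r + 1 : ℕ) : K) * a (Fin.last n) ^ r *
                derivative (a (Fin.last n))) := by
          rw [derivative_mul, derivative_pow, Nat.add_sub_cancel]
        have key : a (Fin.last n) * derivative (a j * a (Fin.last n) ^ (r + 1)) = 0 := by
          rw [hd, hc, map_neg, map_one]
          linear_combination (a (Fin.last n) ^ (r + 1)) * hrel j
        exact (mul_eq_zero.mp key).resolve_left hane
      · have hM0 : ∀ j, M 0 j = f j := by
          intro j
          show derivative^[((0 : Fin (n+1)) : ℕ)] (f j) = f j
          simp
        have he : ∀ j ∈ Finset.univ, (a j * a (Fin.last n) ^ (r + 1)) * f j =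
            (M 0 j * a j) * a (Fin.last n) ^ (r + 1) := by
          intro j _
          rw [hM0 j]
          ring
        rw [Finset.sum_congr rfl he, ← Finset.sum_mul, hrow 0, zero_mul]
      · refine ⟨Fin.last n, fun hcon => ?_⟩
        rcases mul_eq_zero.mp hcon with h | h
        · exact hane h
        · exact hane (pow_eq_zero_iff (Nat.succ_ne_zero r) |>.mp h)

end Aux

theorem stmt14 {K : Type*} [Field K] (p : ℕ) (hp : p.Prime) [CharP K p]
    {k : ℕ} (f : Fin k → K[X]) :
    (∀ b : Fin k → K[X], (∀ j, ∃ c : K[X], b j = c.comp (X ^ p)) →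
        (∑ j, b j * f j) = 0 → ∀ j, b j = 0) ↔ wronskian f ≠ 0 := by
  constructor
  · intro hli hW0
    obtain ⟨b, hb1, hb2, j, hj⟩ := exists_rel p hp k f hW0
    exact hj (hli b (fun j => (comp_X_pow_iff p hp _).mpr (hb1 j)) hb2 j)
  · intro hW b hbc hsum j
    have hb1 : ∀ j, derivative (b j) = 0 := fun j => (comp_X_pow_iff p hp _).mp (hbc j)
    have hM : (Matrix.of fun i j : Fin k => derivative^[(i : ℕ)] (f j)).mulVec b = 0 := by
      funext i
      have h0 := sum_iterate f b hb1 hsum (i : ℕ)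
      simp only [Matrix.mulVec, dotProduct, Matrix.of_apply, Pi.zero_apply]
      rw [← h0]
      exact Finset.sum_congr rfl fun j _ => mul_comm _ _
    have hW' : (Matrix.of fun i j : Fin k => derivative^[(i : ℕ)] (f j)).det ≠ 0 := hW
    exact congrFun (mulVec_zero_of_det_ne hW' hM) j
end

section
/- Let K be a field of characteristic p > 0 and P = Σ_{j=1}^k a_j X^{α_j}(1+X)^{β_j} with α_1 ≤ ... ≤ α_k. If p > max_j (α_j + β_j) and P is not identically zero, then val(P) ≤ max_{1≤j≤k} (α_j + (k+1−j choose 2)). -/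
open Polynomial Finset

namespace Stmt15Aux

variable {K : Type*} [Field K]

lemma dvd_derivative {c : K} {m : ℕ} {Q : K[X]} (h : (X - C c) ^ m ∣ Q) :
    (X - C c) ^ (m - 1) ∣ derivative Q := by
  obtain ⟨R, rfl⟩ := h
  rw [derivative_mul, derivative_pow, derivative_X_sub_C, mul_one]
  refine dvd_add ?_ ?_
  · exact Dvd.dvd.mul_right (dvd_mul_left _ _) R
  · exact Dvd.dvd.mul_right (pow_dvd_pow _ (Nat.sub_le m 1)) _

lemma dvd_iterate_derivative {c : K} {i : ℕ} :
    ∀ {m : ℕ} {Q : K[X]}, (X - C c) ^ m ∣ Q → (X - C c) ^ (m - i) ∣ derivative^[i] Q := by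
  induction i with
  | zero => intro m Q h; simpa using h
  | succ i ih =>
    intro m Q h
    rw [Function.iterate_succ_apply]
    have := ih (dvd_derivative h)
    rwa [show m - 1 - i = m - (i + 1) by omega] at this

lemma X_dvd_iterate_derivative {i m : ℕ} {Q : K[X]} (h : X ^ m ∣ Q) :
    X ^ (m - i) ∣ derivative^[i] Q := by
  have h' : (X - C (0 : K)) ^ m ∣ Q := by simpa using h
  simpa using dvd_iterate_derivative (i := i) h'

lemma X_pow_trailing_dvd (Q : K[X]) : X ^ Q.natTrailingDegree ∣ Q :=
  X_pow_dvd_iff.mpr fun _ hd => coeff_eq_zero_of_lt_natTrailingDegree hd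

lemma le_trailing_of_dvd {Q : K[X]} (hQ : Q ≠ 0) {n : ℕ} (h : X ^ n ∣ Q) :
    n ≤ Q.natTrailingDegree := by
  by_contra hn
  push_neg at hn
  have h0 : Q.coeff Q.natTrailingDegree = 0 := X_pow_dvd_iff.mp h _ hn
  exact hQ (trailingCoeff_eq_zero.mp h0)

lemma coeff_prod_of_dvd {k : ℕ} (P : Fin k → K[X]) (m : Fin k → ℕ)
    (h : ∀ j, X ^ (m j) ∣ P j) :
    (∏ j, P j).coeff (∑ j, m j) = ∏ j, (P j).coeff (m j) := by
  choose R hR using h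
  have h1 : ∏ j, P j = X ^ (∑ j, m j) * ∏ j, R j := by
    rw [← prod_pow_eq_pow_sum, ← prod_mul_distrib]
    exact prod_congr rfl fun j _ => hR j
  have h2 : ∀ j, (P j).coeff (m j) = (R j).coeff 0 := by
    intro j
    rw [hR j]
    simpa using coeff_X_pow_mul (R j) (m j) 0
  have h3 := coeff_X_pow_mul (∏ j, R j) (∑ j, m j) 0
  rw [h1]
  simp only [zero_add] at h3
  rw [h3, coeff_zero_eq_eval_zero, eval_prod]
  exact prod_congr rfl fun j _ => by rw [h2 j, coeff_zero_eq_eval_zero]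

lemma det_ne_zero {p k : ℕ} [CharP K p] (f : Fin k → K[X])
    (hind : LinearIndependent K f) (hdeg : ∀ j, (f j).natDegree < p) :
    (Matrix.of fun i j : Fin k => derivative^[(i : ℕ)] (f j)).det ≠ 0 := by
  classical
  rcases Nat.eq_zero_or_pos k with rfl | hk
  · simp [Matrix.det_isEmpty]
  have hp : 0 < p := (Nat.zero_le _).trans_lt (hdeg ⟨0, hk⟩)
  set V : Submodule K K[X] := Submodule.span K (Set.range f) with hV
  have hVdeg : ∀ g ∈ V, g.natDegree < p := by
    intro g hg
    induction hg using Submodule.span_induction with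
    | mem x hx => obtain ⟨j, rfl⟩ := hx; exact hdeg j
    | zero => simpa using hp
    | add x y hx hy ihx ihy =>
      exact (natDegree_add_le x y).trans_lt (max_lt ihx ihy)
    | smul a x hx ihx => exact (natDegree_smul_le a x).trans_lt ihx
  set S : Finset ℕ :=
    (Finset.range p).filter (fun n => ∃ g, g ∈ V ∧ g ≠ 0 ∧ g.natTrailingDegree = n) with hS
  have hcard : k ≤ S.card := by
    let Ψ : V →ₗ[K] ({x // x ∈ S} → K) :=
      LinearMap.pi fun s : {x // x ∈ S} => (lcoeff K (s : ℕ)).comp V.subtype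
    have hΨker : ∀ z : V, Ψ z = 0 → z = 0 := by
      intro z hz
      by_contra hz0
      have hz1 : (z : K[X]) ≠ 0 := fun h => hz0 (Subtype.ext h)
      have hmemS : (z : K[X]).natTrailingDegree ∈ S := by
        rw [hS, Finset.mem_filter, Finset.mem_range]
        exact ⟨lt_of_le_of_lt (natTrailingDegree_le_natDegree _) (hVdeg _ z.2),
          z, z.2, hz1, rfl⟩
      have := congrFun hz ⟨_, hmemS⟩
      simp only [Ψ, LinearMap.pi_apply, LinearMap.comp_apply, Submodule.subtype_apply,
        lcoeff_apply, Pi.zero_apply] at this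
      exact hz1 (trailingCoeff_eq_zero.mp this)
    have hΨinj : Function.Injective Ψ := by
      rw [← LinearMap.ker_eq_bot]
      exact LinearMap.ker_eq_bot'.mpr hΨker
    have h1 : Module.finrank K V = k := by
      rw [hV, finrank_span_eq_card hind, Fintype.card_fin]
    have h2 := LinearMap.finrank_le_finrank_of_injective hΨinj
    rwa [h1, Module.finrank_pi, Fintype.card_coe] at h2
  obtain ⟨T, hTS, hT⟩ := Finset.exists_subset_card_eq hcard
  set v : Fin k → ℕ := fun i => T.orderEmbOfFin hT i with hv
  have hvmono : StrictMono v := (T.orderEmbOfFin hT).strictMono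
  have hvS : ∀ i, v i ∈ S := fun i => hTS (Finset.orderEmbOfFin_mem T hT i)
  have hvp : ∀ i, v i < p := fun i => Finset.mem_range.mp (Finset.mem_filter.mp (hvS i)).1
  have hvex : ∀ i, ∃ g, g ∈ V ∧ g ≠ 0 ∧ g.natTrailingDegree = v i := fun i =>
    (Finset.mem_filter.mp (hvS i)).2
  choose g hgV hg0 hgtrail using hvex
  have hgspan : ∀ j, ∃ co : Fin k → K, ∑ t, co t • f t = g j := by
    intro j
    exact (Submodule.mem_span_range_iff_exists_fun K).mp (hV ▸ hgV j)
  choose co hco using hgspan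
  set M : Matrix (Fin k) (Fin k) K[X] :=
    Matrix.of fun i j : Fin k => derivative^[(i : ℕ)] (f j) with hM
  set Mg : Matrix (Fin k) (Fin k) K[X] :=
    Matrix.of fun i j : Fin k => derivative^[(i : ℕ)] (g j) with hMg
  have hfact : Mg = M * Matrix.of (fun t j : Fin k => (C (co j t) : K[X])) := by
    refine Matrix.ext fun i j => ?_
    rw [Matrix.mul_apply]
    simp only [Mg, M, Matrix.of_apply]
    rw [← hco j, iterate_derivative_sum]
    exact Finset.sum_congr rfl fun t _ => by
      rw [iterate_derivative_smul, smul_eq_C_mul, mul_comm]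
  suffices hMgdet : Mg.det ≠ 0 by
    intro h0
    rw [hfact, Matrix.det_mul, h0, zero_mul] at hMgdet
    exact hMgdet rfl
  -- coefficient computation
  set C2 : ℕ := ∑ i : Fin k, (i : ℕ) with hC2
  have hle_apply : ∀ n, ∀ i : Fin k, (i : ℕ) = n → n ≤ v i := by
    intro n
    induction n with
    | zero => intro i _; exact Nat.zero_le _
    | succ n ih =>
      intro i hi
      have hn : n < k := by have := i.isLt; omega
      have h1 := ih ⟨n, hn⟩ rfl
      have h2 : v ⟨n, hn⟩ < v i := hvmono (by simp [Fin.lt_def]; omega)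
      omega
  have hvsum : C2 ≤ ∑ i, v i := Finset.sum_le_sum fun i _ => hle_apply _ i rfl
  set n0 : ℕ := (∑ i, v i) - C2 with hn0
  have key : ∀ σ : Equiv.Perm (Fin k),
      (∏ j, derivative^[((σ j : ℕ))] (g j)).coeff n0 =
        ∏ j, (((v j).descFactorial ((σ j : ℕ)) : K) * (g j).coeff (v j)) := by
    intro σ
    have hdvd : ∀ j, X ^ (v j - (σ j : ℕ)) ∣ derivative^[(σ j : ℕ)] (g j) := by
      intro j
      exact X_dvd_iterate_derivative (hgtrail j ▸ X_pow_trailing_dvd (g j))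
    have hσsum : ∑ j, ((σ j : ℕ)) = C2 := Equiv.sum_comp σ (fun i : Fin k => (i : ℕ))
    by_cases hσ : ∀ j, (σ j : ℕ) ≤ v j
    · have hsum : ∑ j, (v j - (σ j : ℕ)) = n0 := by
        have := Finset.sum_add_distrib (s := Finset.univ)
          (f := fun j : Fin k => v j - (σ j : ℕ)) (g := fun j => (σ j : ℕ))
        have h4 : ∑ j, ((v j - (σ j : ℕ)) + (σ j : ℕ)) = ∑ j, v j :=
          Finset.sum_congr rfl fun j _ => by have := hσ j; omega
        omega
      rw [← hsum, coeff_prod_of_dvd _ _ hdvd]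
      refine Finset.prod_congr rfl fun j _ => ?_
      have h1 : (v j - (σ j : ℕ)) + (σ j : ℕ) = v j := by have := hσ j; omega
      rw [coeff_iterate_derivative, h1, nsmul_eq_mul]
    · push_neg at hσ
      obtain ⟨j0, hj0⟩ := hσ
      have hrhs : ∏ j, (((v j).descFactorial ((σ j : ℕ)) : K) * (g j).coeff (v j)) = 0 := by
        apply Finset.prod_eq_zero (Finset.mem_univ j0)
        rw [Nat.descFactorial_eq_zero_iff_lt.mpr hj0, Nat.cast_zero, zero_mul]
      rw [hrhs]
      have hbig : n0 < ∑ j, (v j - (σ j : ℕ)) := by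
        have hlt : ∑ j, v j < ∑ j, ((v j - (σ j : ℕ)) + (σ j : ℕ)) := by
          refine Finset.sum_lt_sum (fun j _ => by omega) ⟨j0, Finset.mem_univ _, by omega⟩
        rw [Finset.sum_add_distrib, hσsum] at hlt
        omega
      have hdvdprod : X ^ (∑ j, (v j - (σ j : ℕ))) ∣ ∏ j, derivative^[((σ j : ℕ))] (g j) := by
        rw [← prod_pow_eq_pow_sum]
        exact Finset.prod_dvd_prod_of_dvd _ _ fun j _ => hdvd j
      exact X_pow_dvd_iff.mp hdvdprod n0 hbig
  have hcoeff : (Mg.det).coeff n0 =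
      (∏ j, (g j).coeff (v j)) *
        (Matrix.of fun i j : Fin k => ((v j).descFactorial ((i : ℕ)) : K)).det := by
    rw [Matrix.det_apply', finset_sum_coeff, Matrix.det_apply', Finset.mul_sum]
    refine Finset.sum_congr rfl fun σ _ => ?_
    have hcast : ((Equiv.Perm.sign σ : ℤ) : K[X]) = C ((Equiv.Perm.sign σ : ℤ) : K) := by
      rw [map_intCast]
    simp only [hMg, Matrix.of_apply]
    rw [hcast, coeff_C_mul, key σ, Finset.prod_mul_distrib]
    ring
  have hVander :
      (Matrix.of fun i j : Fin k => ((v j).descFactorial ((i : ℕ)) : K)).det ≠ 0 := by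
    have hformula := Matrix.det_eval_matrixOfPolynomials_eq_det_vandermonde
      (fun i : Fin k => ((v i : ℕ) : K)) (fun i : Fin k => descPochhammer K (i : ℕ))
      (fun i => descPochhammer_natDegree K (i : ℕ))
      (fun i => monic_descPochhammer K (i : ℕ))
    have htr : (Matrix.of fun i j : Fin k => ((v j).descFactorial ((i : ℕ)) : K)).det =
        (Matrix.of fun i j : Fin k =>
          ((descPochhammer K ((j : ℕ))).eval ((v i : ℕ) : K))).det := by
      rw [← Matrix.det_transpose (Matrix.of fun i j : Fin k =>
          ((descPochhammer K ((j : ℕ))).eval ((v i : ℕ) : K)))]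
      congr 1
      refine Matrix.ext fun i j => ?_
      simp only [Matrix.transpose_apply, Matrix.of_apply]
      rw [descPochhammer_eval_eq_descFactorial]
    rw [htr, ← hformula, Matrix.det_vandermonde]
    refine Finset.prod_ne_zero_iff.mpr fun i _ => Finset.prod_ne_zero_iff.mpr fun j hj => ?_
    have hij : i < j := Finset.mem_Ioi.mp hj
    have hne : ((v j : ℕ) : K) ≠ ((v i : ℕ) : K) := by
      intro h
      have := CharP.natCast_injOn_Iio K p (Set.mem_Iio.mpr (hvp j)) (Set.mem_Iio.mpr (hvp i)) h
      exact absurd this (hvmono hij).ne'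
    exact sub_ne_zero.mpr hne
  intro h0
  rw [h0, coeff_zero] at hcoeff
  have hl : ∏ j, (g j).coeff (v j) ≠ 0 := by
    refine Finset.prod_ne_zero_iff.mpr fun j _ => ?_
    rw [← hgtrail j]
    exact fun h => hg0 j (trailingCoeff_eq_zero.mp h)
  exact (mul_ne_zero hl hVander) hcoeff.symm

lemma main (p : ℕ) [CharP K p] :
    ∀ (k : ℕ) (a : Fin k → K) (α β : Fin k → ℕ), Monotone α → (∀ j, α j + β j < p) →
      (∑ j, C (a j) * X ^ (α j) * (1 + X) ^ (β j)) ≠ 0 →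
      ∃ j : Fin k, (∑ j, C (a j) * X ^ (α j) * (1 + X) ^ (β j)).natTrailingDegree ≤
        α j + (k - (j : ℕ)).choose 2 := by
  intro k
  induction k using Nat.strong_induction_on with
  | _ k IH =>
  rcases k with _ | k
  · intro a α β _ _ hP
    simp at hP
  intro a α β hα hchar hP
  set u : K[X] := 1 + X with hu
  set f : Fin (k + 1) → K[X] := fun j => X ^ (α j) * u ^ (β j) with hfdef
  have reduce : ∀ a' : Fin (k + 1) → K,
      (∑ j, C (a' j) * X ^ (α j) * u ^ (β j)) = (∑ j, C (a j) * X ^ (α j) * u ^ (β j)) →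
      ∀ q : Fin (k + 1), a' q = 0 →
      ∃ j : Fin (k + 1), (∑ j, C (a j) * X ^ (α j) * u ^ (β j)).natTrailingDegree ≤
        α j + (k + 1 - (j : ℕ)).choose 2 := by
    intro a' hsum q hq
    have hsplit := Fin.sum_univ_succAbove
      (fun j => C (a' j) * X ^ (α j) * u ^ (β j)) q
    rw [hq, map_zero, zero_mul, zero_mul, zero_add] at hsplit
    have hmono : Monotone fun i : Fin k => α (q.succAbove i) :=
      hα.comp (Fin.strictMono_succAbove q).monotone
    have heq : (∑ j, C (a j) * X ^ (α j) * u ^ (β j)) =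
        ∑ i : Fin k, C (a' (q.succAbove i)) * X ^ (α (q.succAbove i)) *
          u ^ (β (q.succAbove i)) := by
      rw [← hsum, hsplit]
    have hP' : (∑ i : Fin k, C (a' (q.succAbove i)) * X ^ (α (q.succAbove i)) *
        u ^ (β (q.succAbove i))) ≠ 0 := by
      rw [← heq]; exact hP
    obtain ⟨j', hj'⟩ := IH k (Nat.lt_succ_self k) (fun i => a' (q.succAbove i))
      (fun i => α (q.succAbove i)) (fun i => β (q.succAbove i)) hmono
      (fun i => hchar _) hP'
    refine ⟨q.succAbove j', ?_⟩
    have hle : ((q.succAbove j' : ℕ)) ≤ (j' : ℕ) + 1 := by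
      rcases lt_or_ge (Fin.castSucc j') q with h | h
      · rw [Fin.succAbove_of_castSucc_lt _ _ h, Fin.coe_castSucc]; omega
      · rw [Fin.succAbove_of_le_castSucc _ _ h, Fin.val_succ]
    rw [heq]
    refine hj'.trans (Nat.add_le_add_left (Nat.choose_le_choose 2 ?_) _)
    have := j'.isLt
    omega
  by_cases hz : ∃ q, a q = 0
  · obtain ⟨q, hq⟩ := hz
    exact reduce a rfl q hq
  push_neg at hz
  have hsmul : ∀ (b : Fin (k+1) → K) (j : Fin (k+1)),
      C (b j) * X ^ (α j) * u ^ (β j) = b j • f j := by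
    intro b j
    rw [smul_eq_C_mul, hfdef, mul_assoc]
  have hPf : (∑ j, C (a j) * X ^ (α j) * u ^ (β j)) = ∑ j, a j • f j :=
    Finset.sum_congr rfl fun j _ => hsmul a j
  by_cases hind : LinearIndependent K f
  · -- independent case : Wronskian argument
    set P : K[X] := ∑ j, C (a j) * X ^ (α j) * u ^ (β j) with hPdef2
    set M : Matrix (Fin (k+1)) (Fin (k+1)) K[X] :=
      Matrix.of fun i j => derivative^[(i : ℕ)] (f j) with hMdef
    have humonic : u.Monic := by
      rw [hu, add_comm, ← C_1]
      exact monic_X_add_C 1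
    have hudeg : u.natDegree = 1 := by
      rw [hu, add_comm, ← C_1]
      exact natDegree_X_add_C 1
    have hfdeg : ∀ j, (f j).natDegree = α j + β j := by
      intro j
      rw [hfdef]
      rw [(monic_X_pow (R := K) (α j)).natDegree_mul (humonic.pow _),
        natDegree_X_pow, natDegree_pow, hudeg, mul_one]
    have hW : M.det ≠ 0 :=
      det_ne_zero (p := p) f hind (fun j => by rw [hfdeg j]; exact hchar j)
    set C2 : ℕ := ∑ i : Fin (k+1), (i : ℕ) with hC2def
    have hσC2 : ∀ σ : Equiv.Perm (Fin (k+1)), ∑ j, ((σ j : ℕ)) = C2 := fun σ =>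
      Equiv.sum_comp σ (fun i : Fin (k+1) => (i : ℕ))
    set A : ℕ := ∑ j, α j with hA
    set B : ℕ := ∑ j, β j with hB
    have hα0A : α 0 ≤ A :=
      Finset.single_le_sum (f := fun j => α j) (fun _ _ => Nat.zero_le _) (Finset.mem_univ 0)
    have hPderiv : (fun i : Fin (k+1) => derivative^[(i : ℕ)] P) =
        fun i => ∑ j, (C (a j)) • M i j := by
      funext i
      rw [hPdef2, iterate_derivative_sum]
      refine Finset.sum_congr rfl fun j _ => ?_
      rw [hsmul a j, iterate_derivative_smul, smul_eq_C_mul, smul_eq_mul]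
      rfl
    have hdetN : (M.updateCol 0 (fun i => derivative^[(i : ℕ)] P)).det
        = C (a 0) • M.det := by
      rw [hPderiv]
      exact Matrix.det_updateCol_sum M 0 (fun j => C (a j))
    set vP : ℕ := P.natTrailingDegree with hvP
    have hdvdN : X ^ ((vP + (A - α 0)) - C2) ∣
        (M.updateCol 0 (fun i => derivative^[(i : ℕ)] P)).det := by
      rw [Matrix.det_apply']
      refine Finset.dvd_sum fun σ _ => ?_
      set cf : Fin (k+1) → ℕ := fun j => if j = 0 then vP else α j with hcf
      have hcol : ∀ j, X ^ (cf j - (σ j : ℕ)) ∣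
          (M.updateCol 0 (fun i => derivative^[(i : ℕ)] P)) (σ j) j := by
        intro j
        rw [Matrix.updateCol_apply]
        by_cases hj : j = 0
        · rw [if_pos hj, hcf]
          simp only [hj, if_pos rfl]
          exact X_dvd_iterate_derivative (X_pow_trailing_dvd P)
        · rw [if_neg hj, hcf]
          simp only [if_neg hj, hMdef, Matrix.of_apply]
          exact X_dvd_iterate_derivative (dvd_mul_right _ _)
      have hprod : X ^ (∑ j, (cf j - (σ j : ℕ))) ∣
          ∏ j, (M.updateCol 0 (fun i => derivative^[(i : ℕ)] P)) (σ j) j := by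
        rw [← prod_pow_eq_pow_sum]
        exact Finset.prod_dvd_prod_of_dvd _ _ fun j _ => hcol j
      refine Dvd.dvd.mul_left (dvd_trans (pow_dvd_pow X ?_) hprod) _
      have hsum1 : cf 0 + ∑ j ∈ Finset.univ.erase 0, cf j = ∑ j, cf j :=
        Finset.add_sum_erase _ cf (Finset.mem_univ 0)
      have hsum2 : α 0 + ∑ j ∈ Finset.univ.erase 0, α j = A :=
        Finset.add_sum_erase _ (fun j => α j) (Finset.mem_univ 0)
      have hsame : ∑ j ∈ Finset.univ.erase 0, cf j = ∑ j ∈ Finset.univ.erase 0, α j :=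
        Finset.sum_congr rfl fun j hj => by
          rw [hcf]; simp [Finset.ne_of_mem_erase hj]
      have hsum3 : ∑ j, cf j ≤ (∑ j, (cf j - (σ j : ℕ))) + C2 := by
        rw [← hσC2 σ, ← Finset.sum_add_distrib]
        exact Finset.sum_le_sum fun j _ => by omega
      have hcf0 : cf 0 = vP := by simp [hcf]
      omega
    have hXdvdW : X ^ ((vP + (A - α 0)) - C2) ∣ M.det := by
      have h1 : X ^ ((vP + (A - α 0)) - C2) ∣ C (a 0) * M.det := by
        rw [← smul_eq_mul, ← hdetN]
        exact hdvdN
      have h2 : M.det = C (a 0)⁻¹ * (C (a 0) * M.det) := by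
        rw [← mul_assoc, ← C_mul, inv_mul_cancel₀ (hz 0), C_1, one_mul]
      rw [h2]
      exact Dvd.dvd.mul_left h1 _
    have hE : (vP + (A - α 0)) - C2 ≤ M.det.natTrailingDegree :=
      le_trailing_of_dvd hW hXdvdW
    have hdegW : M.det.natDegree ≤ (A + B) - C2 := by
      rw [Matrix.det_apply']
      refine natDegree_sum_le_of_forall_le _ _ fun σ _ => ?_
      refine (natDegree_mul_le).trans ?_
      rw [natDegree_intCast, zero_add]
      by_cases hσ : ∀ j, (σ j : ℕ) ≤ α j + β j
      · refine (natDegree_prod_le _ _).trans ?_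
        have hentry : ∀ j, (M (σ j) j).natDegree ≤ (α j + β j) - (σ j : ℕ) := by
          intro j
          have h3 := natDegree_iterate_derivative (f j) ((σ j : ℕ))
          rw [hfdeg j] at h3
          simpa [hMdef] using h3
        refine (Finset.sum_le_sum fun j _ => hentry j).trans ?_
        have h4 : (∑ j, ((α j + β j) - (σ j : ℕ))) + C2 = ∑ j, (α j + β j) := by
          rw [← hσC2 σ, ← Finset.sum_add_distrib]
          exact Finset.sum_congr rfl fun j _ => by have := hσ j; omega
        have hAB : ∑ j, (α j + β j) = A + B := Finset.sum_add_distrib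
        omega
      · push_neg at hσ
        obtain ⟨j0, hj0⟩ := hσ
        have h5 : ∏ j, M (σ j) j = 0 := by
          refine Finset.prod_eq_zero (Finset.mem_univ j0) ?_
          have : M (σ j0) j0 = derivative^[((σ j0 : ℕ))] (f j0) := by simp [hMdef]
          rw [this]
          exact iterate_derivative_eq_zero (by rw [hfdeg j0]; omega)
        rw [h5]
        simp
    have hXu : (X - C (-1 : K)) = u := by
      rw [hu, map_neg, C_1, sub_neg_eq_add, add_comm]
    have hudvdW : (X - C (-1 : K)) ^ (B - C2) ∣ M.det := by
      rw [Matrix.det_apply']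
      refine Finset.dvd_sum fun σ _ => ?_
      have hcol : ∀ j, (X - C (-1 : K)) ^ (β j - (σ j : ℕ)) ∣ M (σ j) j := by
        intro j
        have : M (σ j) j = derivative^[((σ j : ℕ))] (f j) := by simp [hMdef]
        rw [this]
        refine dvd_iterate_derivative ?_
        rw [hXu]
        exact dvd_mul_left _ _
      have hprod : (X - C (-1 : K)) ^ (∑ j, (β j - (σ j : ℕ))) ∣ ∏ j, M (σ j) j := by
        rw [← prod_pow_eq_pow_sum]
        exact Finset.prod_dvd_prod_of_dvd _ _ fun j _ => hcol j
      refine Dvd.dvd.mul_left (dvd_trans (pow_dvd_pow _ ?_) hprod) _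
      have h6 : B ≤ (∑ j, (β j - (σ j : ℕ))) + C2 := by
        rw [← hσC2 σ, ← Finset.sum_add_distrib, hB]
        exact Finset.sum_le_sum fun j _ => by omega
      omega
    have hcop : IsCoprime ((X : K[X]) ^ M.det.natTrailingDegree)
        ((X - C (-1 : K)) ^ (B - C2)) := by
      have h0 : IsCoprime (X - C (0 : K)) (X - C (-1 : K)) :=
        isCoprime_X_sub_C_of_isUnit_sub (by simp)
      rw [map_zero, sub_zero] at h0
      exact h0.pow
    have hmul := hcop.mul_dvd (X_pow_trailing_dvd M.det) hudvdW
    have hdeg2 : M.det.natTrailingDegree + (B - C2) ≤ M.det.natDegree := by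
      have h1 := natDegree_le_of_dvd hmul hW
      rwa [natDegree_mul (pow_ne_zero _ X_ne_zero)
        (pow_ne_zero _ (X_sub_C_ne_zero (-1))), natDegree_pow, natDegree_pow,
        natDegree_X, natDegree_X_sub_C, mul_one, mul_one] at h1
    refine ⟨0, ?_⟩
    have hC2choose : C2 = (k + 1).choose 2 := by
      rw [hC2def, Fin.sum_univ_eq_sum_range (fun i => i) (k + 1),
        Finset.sum_range_id, Nat.choose_two_right]
    have hfin : (k + 1 - ((0 : Fin (k + 1)) : ℕ)).choose 2 = C2 := by
      rw [Fin.val_zero, Nat.sub_zero, hC2choose]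
    rw [hfin]
    omega
  · -- dependent case
    obtain ⟨c, hc, q, hcq⟩ := Fintype.not_linearIndependent_iff.mp hind
    refine reduce (fun i => a i - a q / c q * c i) ?_ q (by field_simp; ring)
    calc (∑ j, C (a j - a q / c q * c j) * X ^ (α j) * u ^ (β j))
        = ∑ j, (a j • f j - (a q / c q) • (c j • f j)) := by
          refine Finset.sum_congr rfl fun j _ => ?_
          rw [hsmul (fun i => a i - a q / c q * c i) j, sub_smul, mul_smul]
      _ = (∑ j, a j • f j) - (a q / c q) • (∑ j, c j • f j) := by
          rw [Finset.sum_sub_distrib, Finset.smul_sum]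
      _ = ∑ j, C (a j) * X ^ (α j) * u ^ (β j) := by
          rw [hc, smul_zero, sub_zero, ← hPf]

end Stmt15Aux

theorem stmt15 {K : Type*} [Field K] (p : ℕ) (hp : p.Prime) [CharP K p] (k : ℕ)
    (a : Fin k → K) (α β : Fin k → ℕ) (hα : Monotone α)
    (hchar : ∀ j, α j + β j < p)
    (P : K[X]) (hPdef : P = ∑ j, C (a j) * X ^ (α j) * (1 + X) ^ (β j))
    (hP : P ≠ 0) :
    ∃ j : Fin k, P.rootMultiplicity 0 ≤ α j + (k - (j : ℕ)).choose 2 := by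
  subst hPdef
  obtain ⟨j, hj⟩ := Stmt15Aux.main p k a α β hα hchar hP
  exact ⟨j, by rwa [rootMultiplicity_eq_natTrailingDegree']⟩
end

section
/- Let K be a field of characteristic zero, f_j = X^{α_j}(1+X)^{β_j} with α_j, β_j ≥ k for all 1 ≤ j ≤ k. Then the Wronskian of f_1,...,f_k factors as W(f_1,...,f_k) = X^{Σ_j α_j − (k choose 2)} · (1+X)^{Σ_j β_j − (k choose 2)} · D(X) for some polynomial D of degree at most (k choose 2). -/
open Polynomial

lemma iter_deriv_add {K : Type*} [Field K] (n : ℕ) (p q : K[X]) :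
    derivative^[n] (p + q) = derivative^[n] p + derivative^[n] q := by
  induction n generalizing p q with
  | zero => simp
  | succ n ih => simp [Function.iterate_succ_apply, derivative_add, ih]

lemma key_s18 {K : Type*} [Field K] : ∀ (i a b : ℕ), ∃ q : K[X], q.degree ≤ (i : ℕ) ∧
    derivative^[i] (X ^ (a + i) * (1 + X) ^ (b + i) : K[X]) = X ^ a * (1 + X) ^ b * q := by
  intro i
  induction i with
  | zero => intro a b; exact ⟨1, by simp, by simp⟩
  | succ i ih =>
    intro a b
    obtain ⟨q₁, hq₁d, hq₁⟩ := ih a (b + 1)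
    obtain ⟨q₂, hq₂d, hq₂⟩ := ih (a + 1) b
    have h1x : (1 + X : K[X]).degree ≤ 1 := by
      simpa [add_comm] using (degree_X_add_C (1 : K)).le
    have hcast : ((i + 1 : ℕ) : WithBot ℕ) = 1 + (i : WithBot ℕ) := by
      push_cast; rw [add_comm]
    refine ⟨C ((a + i + 1 : ℕ) : K) * ((1 + X) * q₁) + C ((b + i + 1 : ℕ) : K) * (X * q₂), ?_, ?_⟩
    · apply le_trans (degree_add_le _ _)
      apply max_le
      · refine le_trans (degree_mul_le _ _) ?_
        refine le_trans (add_le_add degree_C_le (degree_mul_le _ _)) ?_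
        rw [zero_add, hcast]
        exact add_le_add h1x hq₁d
      · refine le_trans (degree_mul_le _ _) ?_
        refine le_trans (add_le_add degree_C_le (degree_mul_le _ _)) ?_
        rw [zero_add, hcast, degree_X]
        exact add_le_add le_rfl hq₂d
    · have e1 : a + (i + 1) = (a + i) + 1 := by omega
      have e2 : b + (i + 1) = (b + i) + 1 := by omega
      have hd : derivative (X ^ (a + (i + 1)) * (1 + X) ^ (b + (i + 1)) : K[X])
          = C ((a + i + 1 : ℕ) : K) * (X ^ (a + i) * (1 + X) ^ ((b + 1) + i))
          + C ((b + i + 1 : ℕ) : K) * (X ^ ((a + 1) + i) * (1 + X) ^ (b + i)) := by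
        rw [e1, e2, derivative_mul, derivative_X_pow, derivative_pow]
        have h1 : derivative (1 + X : K[X]) = 1 := by simp
        rw [h1, Nat.add_sub_cancel, Nat.add_sub_cancel]
        simp only [C_eq_natCast]
        push_cast
        ring
      rw [Function.iterate_succ_apply, hd, iter_deriv_add,
        iterate_derivative_C_mul, iterate_derivative_C_mul, hq₁, hq₂]
      ring

theorem stmt18 {K : Type*} [Field K] [CharZero K] {k : ℕ} (α β : Fin k → ℕ)
    (hα : ∀ j, k ≤ α j) (hβ : ∀ j, k ≤ β j)
    (f : Fin k → K[X]) (hf : ∀ j, f j = X ^ (α j) * (1 + X) ^ (β j)) :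
    ∃ D : K[X], wronskian f
        = X ^ ((∑ j, α j) - k.choose 2) * (1 + X) ^ ((∑ j, β j) - k.choose 2) * D ∧
      D.degree ≤ (k.choose 2 : ℕ) := by
  classical
  set c := k - 1 with hc
  have hq : ∀ i j : Fin k, ∃ q : K[X], q.degree ≤ ((i : ℕ) : WithBot ℕ) ∧
      derivative^[(i : ℕ)] (f j) = X ^ (α j - (i : ℕ)) * (1 + X) ^ (β j - (i : ℕ)) * q := by
    intro i j
    obtain ⟨q, hd, he⟩ := key_s18 (K := K) (i : ℕ) (α j - (i : ℕ)) (β j - (i : ℕ))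
    have e1 : α j - (i : ℕ) + (i : ℕ) = α j := by have := hα j; have := i.isLt; omega
    have e2 : β j - (i : ℕ) + (i : ℕ) = β j := by have := hβ j; have := i.isLt; omega
    rw [e1, e2] at he
    exact ⟨q, hd, by rw [hf j, he]⟩
  choose q hqd hqe using hq
  -- entrywise factorization
  have entry : ∀ i j : Fin k, derivative^[(i : ℕ)] (f j)
      = (X ^ (α j - c) * (1 + X) ^ (β j - c))
        * ((X * (1 + X)) ^ (c - (i : ℕ)) * q i j) := by
    intro i j
    rw [hqe i j]
    have e1 : α j - (i : ℕ) = (α j - c) + (c - (i : ℕ)) := by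
      have := hα j; have := i.isLt; omega
    have e2 : β j - (i : ℕ) = (β j - c) + (c - (i : ℕ)) := by
      have := hβ j; have := i.isLt; omega
    rw [e1, e2, pow_add, pow_add, mul_pow]
    ring
  refine ⟨Matrix.det (Matrix.of fun i j : Fin k => q i j), ?_, ?_⟩
  · have hW : wronskian f
        = (∏ j : Fin k, (X ^ (α j - c) * (1 + X) ^ (β j - c) : K[X]))
          * ((∏ i : Fin k, ((X * (1 + X)) ^ (c - (i : ℕ)) : K[X]))
            * Matrix.det (Matrix.of fun i j : Fin k => q i j)) := by
      unfold _root_.wronskian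
      have h1 : (Matrix.of fun i j : Fin k => derivative^[(i : ℕ)] (f j))
          = Matrix.of fun i j : Fin k => (X ^ (α j - c) * (1 + X) ^ (β j - c))
            * ((Matrix.of fun i j : Fin k =>
                (X * (1 + X)) ^ (c - (i : ℕ)) * (Matrix.of fun i j : Fin k => q i j) i j) i j) := by
        refine Matrix.ext fun i j => ?_
        simpa using entry i j
      rw [h1, Matrix.det_mul_row, Matrix.det_mul_column]
    -- sums of exponents
    have hsumc : ∑ i : Fin k, (c - (i : ℕ)) = k.choose 2 := by
      rw [Fin.sum_univ_eq_sum_range (fun i => c - i) k]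
      have : ∀ i ∈ Finset.range k, c - i = k - 1 - i := fun i _ => by rw [hc]
      rw [Finset.sum_congr rfl this, Finset.sum_range_reflect (fun i => i) k,
        Finset.sum_range_id, Nat.choose_two_right]
    have hα' : ∑ j : Fin k, (α j - c) = (∑ j, α j) - k * c := by
      rw [Finset.sum_tsub_distrib _ (fun j _ => by have := hα j; omega : ∀ j ∈ Finset.univ, c ≤ α j)]
      simp [Finset.card_univ, mul_comm]
    have hβ' : ∑ j : Fin k, (β j - c) = (∑ j, β j) - k * c := by
      rw [Finset.sum_tsub_distrib _ (fun j _ => by have := hβ j; omega : ∀ j ∈ Finset.univ, c ≤ β j)]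
      simp [Finset.card_univ, mul_comm]
    have hc2 : k.choose 2 * 2 = k * c := by
      rw [hc, ← Finset.sum_range_id_mul_two k]
      congr 1
      rw [Finset.sum_range_id, Nat.choose_two_right]
    have hkkα : k * k ≤ ∑ j, α j := by
      simpa [Finset.card_univ, smul_eq_mul] using
        Finset.card_nsmul_le_sum Finset.univ α k (fun j _ => hα j)
    have hkkβ : k * k ≤ ∑ j, β j := by
      simpa [Finset.card_univ, smul_eq_mul] using
        Finset.card_nsmul_le_sum Finset.univ β k (fun j _ => hβ j)
    have hck : k * c ≤ k * k := Nat.mul_le_mul_left k (by omega)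
    have eα : (∑ j, α j) - k * c + k.choose 2 = (∑ j, α j) - k.choose 2 := by omega
    have eβ : (∑ j, β j) - k * c + k.choose 2 = (∑ j, β j) - k.choose 2 := by omega
    rw [hW, Finset.prod_mul_distrib, Finset.prod_pow_eq_pow_sum, Finset.prod_pow_eq_pow_sum,
      Finset.prod_pow_eq_pow_sum, hsumc, hα', hβ', mul_pow, ← eα, ← eβ, pow_add, pow_add]
    ring
  · -- degree bound
    rw [Matrix.det_apply]
    refine le_trans (degree_sum_le _ _) ?_
    refine Finset.sup_le fun σ _ => ?_
    have hprod : (∏ i : Fin k, (Matrix.of fun i j : Fin k => q i j) (σ i) i).degree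
        ≤ (k.choose 2 : ℕ) := by
      refine le_trans (degree_prod_le _ _) ?_
      have hle : ∀ i : Fin k, ((Matrix.of fun i j : Fin k => q i j) (σ i) i).degree
          ≤ (((σ i : ℕ) : ℕ) : WithBot ℕ) := fun i => by simpa using hqd (σ i) i
      refine le_trans (Finset.sum_le_sum fun i _ => hle i) ?_
      rw [← Nat.cast_sum]
      have : ∑ i : Fin k, ((σ i : ℕ)) = ∑ i : Fin k, (i : ℕ) :=
        Equiv.sum_comp σ (fun i => (i : ℕ))
      rw [this, Fin.sum_univ_eq_sum_range (fun i => i) k, Finset.sum_range_id,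
        Nat.choose_two_right]
    rcases Int.units_eq_one_or (Equiv.Perm.sign σ) with h | h
    · rw [h, one_smul]; exact hprod
    · rw [h, Units.neg_smul, one_smul, degree_neg]; exact hprod
end

section
/- Let K be a field of characteristic zero and P = Σ_{j=1}^k a_j X^{α_j}(1+X)^{β_j} where all α_j are equal to a common value α and the f_j = X^{α}(1+X)^{β_j} have distinct β_j. If P ≠ 0 then val(P) ≤ α + (k−1), and this bound is tight. -/
open Polynomial Finset

private lemma hajos_deriv {K : Type*} [Field K] (c : ℕ) :
    (1 + X : K[X]) * derivative ((1 + X) ^ c) = C (c : K) * (1 + X) ^ c := by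
  cases c with
  | zero => simp
  | succ n =>
    rw [derivative_pow]
    have : derivative (1 + X : K[X]) = 1 := by simp
    rw [this]
    push_cast
    ring_nf

private lemma hajos_key {K : Type*} [Field K] [CharZero K] (n : ℕ) :
    ∀ (S : Finset ℕ) (a : ℕ → K), S.card = n →
      ((X : K[X]) ^ n ∣ ∑ b ∈ S, C (a b) * (1 + X) ^ b) → ∀ b ∈ S, a b = 0 := by
  induction n with
  | zero =>
    intro S a hcard _ b hb
    rw [Finset.card_eq_zero] at hcard
    simp [hcard] at hb
  | succ n ih =>
    intro S a hcard hdvd b hb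
    set Q : K[X] := ∑ c ∈ S, C (a c) * (1 + X) ^ c with hQ
    -- the transformed polynomial
    have hR : (1 + X) * derivative Q - C ((b : K)) * Q
        = ∑ c ∈ S.erase b, C (a c * ((c : K) - (b : K))) * (1 + X) ^ c := by
      rw [hQ, derivative_sum, Finset.mul_sum, Finset.mul_sum, ← Finset.sum_sub_distrib]
      rw [← Finset.sum_erase (f := fun c =>
          (1 + X) * derivative (C (a c) * (1 + X) ^ c) - C ((b : K)) * (C (a c) * (1 + X) ^ c))
          S (a := b) (by
            show (1 + X) * derivative (C (a b) * (1 + X) ^ b)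
              - C ((b : K)) * (C (a b) * (1 + X) ^ b) = 0
            rw [derivative_C_mul, mul_left_comm, hajos_deriv]; ring)]
      apply Finset.sum_congr rfl
      intro c _
      rw [derivative_C_mul, mul_left_comm, hajos_deriv, C_mul, C_sub]
      ring
    -- divisibility of the transformed polynomial
    have hdvdQ : (X : K[X]) ^ n ∣ Q := (pow_dvd_pow X (Nat.le_succ n)).trans hdvd
    have hdvdD : (X : K[X]) ^ n ∣ derivative Q := by
      obtain ⟨T, hT⟩ := hdvd
      rw [hT, derivative_mul, derivative_X_pow, Nat.succ_sub_one]
      exact dvd_add ((dvd_rfl.mul_left _).mul_right _)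
        ((pow_dvd_pow X (Nat.le_succ n)).mul_right _)
    have hdvdR : (X : K[X]) ^ n ∣ ∑ c ∈ S.erase b, C (a c * ((c : K) - (b : K))) * (1 + X) ^ c := by
      rw [← hR]
      exact dvd_sub (hdvdD.mul_left _) (hdvdQ.mul_left _)
    -- apply induction hypothesis
    have hcard' : (S.erase b).card = n := by
      rw [Finset.card_erase_of_mem hb, hcard]; rfl
    have hzero : ∀ c ∈ S.erase b, a c * ((c : K) - (b : K)) = 0 :=
      ih (S.erase b) _ hcard' hdvdR
    have hzero' : ∀ c ∈ S.erase b, a c = 0 := by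
      intro c hc
      have hcb : c ≠ b := Finset.ne_of_mem_erase hc
      have := hzero c hc
      rcases mul_eq_zero.mp this with h | h
      · exact h
      · exfalso
        apply hcb
        have : (c : K) = (b : K) := sub_eq_zero.mp h
        exact_mod_cast this
    -- now Q = C (a b) * (1+X)^b
    have hQb : Q = C (a b) * (1 + X) ^ b := by
      rw [hQ, ← Finset.add_sum_erase _ _ hb, Finset.sum_eq_zero, add_zero]
      intro c hc
      rw [hzero' c hc]; simp
    -- evaluate at 0
    have hXdvd : (X : K[X]) ∣ Q := (dvd_pow_self X (Nat.succ_ne_zero n)).trans hdvd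
    obtain ⟨T, hT⟩ := hXdvd
    have := congrArg (eval 0) hT
    rw [hQb] at this
    simpa using this

theorem stmt19 {K : Type*} [Field K] [CharZero K] (k : ℕ) (hk : 1 ≤ k) (α : ℕ)
    (a : Fin k → K) (β : Fin k → ℕ) (hβ : Function.Injective β)
    (P : K[X]) (hPdef : P = ∑ j, C (a j) * X ^ α * (1 + X) ^ (β j))
    (hP : P ≠ 0) :
    P.rootMultiplicity 0 ≤ α + (k - 1) ∧
      ∃ (a' : Fin k → K) (β' : Fin k → ℕ), Function.Injective β' ∧
        (∑ j, C (a' j) * X ^ α * (1 + X) ^ (β' j)) ≠ 0 ∧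
        (∑ j, C (a' j) * X ^ α * (1 + X) ^ (β' j) : K[X]).rootMultiplicity 0 = α + (k - 1) := by
  have hrmX : ∀ m : ℕ, ((X : K[X]) ^ m).rootMultiplicity 0 = m := by
    intro m
    have := rootMultiplicity_X_sub_C_pow (R := K) 0 m
    simpa using this
  constructor
  · -- upper bound
    set Q : K[X] := ∑ j, C (a j) * (1 + X) ^ (β j) with hQ
    have hPQ : P = X ^ α * Q := by
      rw [hPdef, hQ, Finset.mul_sum]
      apply Finset.sum_congr rfl
      intro j _
      ring
    have hQ0 : Q ≠ 0 := by
      intro h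
      apply hP
      rw [hPQ, h, mul_zero]
    have hrm : Q.rootMultiplicity 0 ≤ k - 1 := by
      by_contra h
      push_neg at h
      have hkle : k ≤ Q.rootMultiplicity 0 := by omega
      have hdvd : (X : K[X]) ^ k ∣ Q := by
        have h1 : ((X : K[X]) - C 0) ^ Q.rootMultiplicity 0 ∣ Q := pow_rootMultiplicity_dvd Q 0
        rw [map_zero, sub_zero] at h1
        exact (pow_dvd_pow X hkle).trans h1
      classical
      set A : ℕ → K := fun b => if h : ∃ j, β j = b then a h.choose else 0 with hA
      have hAβ : ∀ j, A (β j) = a j := by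
        intro j
        have hex : ∃ j', β j' = β j := ⟨j, rfl⟩
        rw [hA]
        simp only [dif_pos hex]
        congr 1
        exact hβ hex.choose_spec
      have himg : ∑ b ∈ Finset.image β Finset.univ, C (A b) * (1 + X) ^ b = Q := by
        rw [Finset.sum_image (fun x _ y _ h => hβ h)]
        apply Finset.sum_congr rfl
        intro j _
        rw [hAβ j]
      have hcard : (Finset.image β Finset.univ).card = k := by
        rw [Finset.card_image_of_injective _ hβ, Finset.card_univ, Fintype.card_fin]
      have hall := hajos_key k (Finset.image β Finset.univ) A hcard (by rw [himg]; exact hdvd)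
      apply hQ0
      rw [hQ]
      apply Finset.sum_eq_zero
      intro j _
      have : a j = 0 := by
        rw [← hAβ j]
        exact hall (β j) (Finset.mem_image_of_mem β (Finset.mem_univ j))
      rw [this]; simp
    have hXα : (X : K[X]) ^ α ≠ 0 := pow_ne_zero _ X_ne_zero
    rw [hPQ, rootMultiplicity_mul (mul_ne_zero hXα hQ0), hrmX]
    omega
  · -- tightness
    refine ⟨fun j => (-1 : K) ^ ((j : ℕ) + (k - 1)) * ((k - 1).choose j), fun j => (j : ℕ),
      fun i j h => Fin.val_injective h, ?_, ?_⟩ <;>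
    · have hsum : (∑ j : Fin k, C ((-1 : K) ^ ((j : ℕ) + (k - 1)) * ((k - 1).choose j : K))
          * X ^ α * (1 + X) ^ (j : ℕ)) = X ^ (α + (k - 1)) := by
        have hbin := sub_pow (1 + X : K[X]) 1 (k - 1)
        have hrange : k - 1 + 1 = k := by omega
        rw [hrange] at hbin
        have hx : (1 + X - 1 : K[X]) = X := by ring
        rw [hx] at hbin
        rw [pow_add]
        rw [hbin, Finset.mul_sum, ← Fin.sum_univ_eq_sum_range
          (f := fun m => X ^ α * ((-1 : K[X]) ^ (m + (k - 1)) * (1 + X) ^ m * 1 ^ (k - 1 - m)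
            * ((k - 1).choose m : K[X])))]
        apply Finset.sum_congr rfl
        intro j _
        rw [C_mul]
        simp only [one_pow, map_pow, map_neg, map_one, map_natCast]
        ring
      rw [hsum]
      first
        | exact pow_ne_zero _ X_ne_zero
        | exact hrmX (α + (k - 1))
end
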